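/- arXiv:2602.00693 — 6 statements merged into one kernel-verified Lean document; each statement's English description precedes it below -/
import Mathlib

section
/- Let v be a hidden node of G and let L : ℝ^E → ℝ be a differentiable function such that L(T^v_α(θ)) = L(θ) for every θ ∈ ℝ^E and every α > 0. Then for every θ ∈ ℝ^E, the gradient g(θ) = ∇L(θ) satisfies the local orthogonality (network-flow) condition Σ_{e ∈ E, e entering v} θ_e · g(θ)_e − Σ_{e ∈ E, e leaving v} θ_e · g(θ)_e = 0. -/
noncomputable section

open Matrix Finset

/-- A finite DAG modeling a feed-forward neural architecture: nodes `V`,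
edges `edges`, input nodes `VI` (no incoming edges), output nodes `VO`
(no outgoing edges), with `VI` and `VO` disjoint. -/
structure DagNet where
  V : Type
  [fintypeV : Fintype V]
  [decEqV : DecidableEq V]
  edges : Finset (V × V)
  VI : Finset V
  VO : Finset V
  acyclic : ∀ v : V, ¬ Relation.TransGen (fun a b : V => (a, b) ∈ edges) v v
  no_edge_into_input : ∀ e ∈ edges, Prod.snd e ∉ VI
  no_edge_from_output : ∀ e ∈ edges, Prod.fst e ∉ VO
  io_disjoint : Disjoint VI VO

attribute [instance] DagNet.fintypeV DagNet.decEqV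

namespace DagNet

variable (G : DagNet)

/-- The hidden nodes `Ṽ = V \ (V_I ∪ V_O)`. -/
def hidden : Finset G.V := Finset.univ \ (G.VI ∪ G.VO)

/-- The type of hidden nodes. -/
abbrev Hidden : Type := {v : G.V // v ∈ G.hidden}

/-- The type of edges. -/
abbrev Edge : Type := {e : G.V × G.V // e ∈ G.edges}

/-- The incidence matrix `B̃` of `G` restricted to hidden rows:
`B̃_{v,(i,j)} = 1` if `v = j`, `-1` if `v = i`, `0` otherwise. -/
def B : Matrix G.Hidden G.Edge ℝ :=
  Matrix.of fun v e =>
    if (e : G.V × G.V).2 = (v : G.V) then 1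
    else if (e : G.V × G.V).1 = (v : G.V) then -1 else 0

/-- The rescaling action `T^v_α`: multiplies by `α` the weight of every edge
entering `v`, by `α⁻¹` the weight of every edge leaving `v`, and leaves the
other coordinates unchanged. -/
def rescale (v : G.V) (α : ℝ) (θ : EuclideanSpace ℝ G.Edge) :
    EuclideanSpace ℝ G.Edge :=
  WithLp.toLp 2 fun e => if (e : G.V × G.V).2 = v then α * θ e
    else if (e : G.V × G.V).1 = v then α⁻¹ * θ e else θ e

/-- `Reaches a b` iff there is a directed path (possibly trivial) from `a` to `b`. -/
def Reaches (a b : G.V) : Prop :=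
  Relation.ReflTransGen (fun x y : G.V => (x, y) ∈ G.edges) a b

/-- The invariant set `H_G(c) = {θ : B̃ θ² = c}` inside Euclidean space `ℝ^E`. -/
def invariantSet (c : G.Hidden → ℝ) : Set (EuclideanSpace ℝ G.Edge) :=
  {θ | G.B.mulVec (fun e => θ e ^ 2) = c}

/-- `u : Fin (k+1) → V` is a directed path in `G`. -/
def IsPathFun {k : ℕ} (u : Fin (k + 1) → G.V) : Prop :=
  ∀ i : Fin k, (u i.castSucc, u i.succ) ∈ G.edges

/-- Pure ancestors of `v`: hidden ancestors `w` of `v` such that every directed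
path from `w` to an output node passes through `v` (this contains `v` itself
whenever `v` is hidden). -/
def pureAnc (v : G.V) : Set G.V :=
  {w | w ∈ G.hidden ∧ G.Reaches w v ∧
    ∀ (k : ℕ) (u : Fin (k + 1) → G.V), G.IsPathFun u → u 0 = w →
      u (Fin.last k) ∈ G.VO → ∃ i, u i = v}

/-- Pure descendants of `v`: hidden descendants `w` of `v` such that every
directed path from an input node to `w` passes through `v`. -/
def pureDesc (v : G.V) : Set G.V :=
  {w | w ∈ G.hidden ∧ G.Reaches v w ∧
    ∀ (k : ℕ) (u : Fin (k + 1) → G.V), G.IsPathFun u → u (Fin.last k) = w →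
      u 0 ∈ G.VI → ∃ i, u i = v}

/-- An out-bottleneck: a hidden node with exactly one outgoing edge. -/
def OutBottleneck (v : G.V) : Prop :=
  v ∈ G.hidden ∧ (G.edges.filter (fun e => e.1 = v)).card = 1

/-- An in-bottleneck: a hidden node with exactly one incoming edge. -/
def InBottleneck (v : G.V) : Prop :=
  v ∈ G.hidden ∧ (G.edges.filter (fun e => e.2 = v)).card = 1

/-- The projection sending each hidden node to itself and each
input/output node to the glued point `⋆ = none`. -/
def pi (v : G.V) : Option G.Hidden :=
  if h : v ∈ G.hidden then some ⟨v, h⟩ else none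

/-- The undirected graph on `Ṽ ⊔ {⋆}` with an edge between `π(u)` and `π(w)`
for each edge `(u,w)` of `G` with nonzero weight. -/
def quotGraph (θ : G.Edge → ℝ) : SimpleGraph (Option G.Hidden) :=
  SimpleGraph.fromRel (fun a b => ∃ e : G.Edge, θ e ≠ 0 ∧
    a = G.pi (e : G.V × G.V).1 ∧ b = G.pi (e : G.V × G.V).2)

end DagNet

/-- for a hidden node `v` and a differentiable `L` invariant under
the rescaling `T^v_α` for all `α > 0`, the gradient satisfies the local
network-flow orthogonality condition at `v`. -/
theorem statement0 (G : DagNet) (v : G.V) (hv : v ∈ G.hidden)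
    (L : EuclideanSpace ℝ G.Edge → ℝ) (hL : Differentiable ℝ L)
    (hinv : ∀ (θ : EuclideanSpace ℝ G.Edge) (α : ℝ), 0 < α →
      L (G.rescale v α θ) = L θ)
    (θ : EuclideanSpace ℝ G.Edge) :
    ∑ e ∈ Finset.univ.filter (fun e : G.Edge => (e : G.V × G.V).2 = v),
        θ e * gradient L θ e
      - ∑ e ∈ Finset.univ.filter (fun e : G.Edge => (e : G.V × G.V).1 = v),
        θ e * gradient L θ e = 0 := by
  classical
  set g := gradient L θ with hg
  set a : EuclideanSpace ℝ G.Edge :=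
    WithLp.toLp 2 (fun e => if (e : G.V × G.V).2 = v then θ e else 0) with ha
  set b : EuclideanSpace ℝ G.Edge :=
    WithLp.toLp 2 (fun e => if (e : G.V × G.V).2 = v then 0
      else if (e : G.V × G.V).1 = v then θ e else 0) with hb
  set c : EuclideanSpace ℝ G.Edge :=
    WithLp.toLp 2 (fun e => if (e : G.V × G.V).2 = v then 0
      else if (e : G.V × G.V).1 = v then 0 else θ e) with hc
  have hres : ∀ α : ℝ, G.rescale v α θ = α • a + α⁻¹ • b + c := by
    intro α; ext e
    simp only [DagNet.rescale, ha, hb, hc, PiLp.add_apply, PiLp.smul_apply, smul_eq_mul]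
    by_cases h2 : (e : G.V × G.V).2 = v
    · simp [h2]
    · by_cases h1 : (e : G.V × G.V).1 = v <;> simp [h1, h2]
  have hθ : θ = (1:ℝ) • a + (1:ℝ)⁻¹ • b + c := by
    rw [← hres 1]; ext e
    simp only [DagNet.rescale]
    by_cases h2 : (e : G.V × G.V).2 = v
    · simp [h2]
    · by_cases h1 : (e : G.V × G.V).1 = v <;> simp [h1, h2]
  -- derivative of the curve
  have hA : HasDerivAt (fun α : ℝ => α • a) ((1:ℝ) • a) 1 :=
    (hasDerivAt_id (1:ℝ)).smul_const a
  have hBinv : HasDerivAt (fun α : ℝ => α⁻¹) (-((1:ℝ)^2)⁻¹) 1 := hasDerivAt_inv one_ne_zero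
  have hB : HasDerivAt (fun α : ℝ => α⁻¹ • b) ((-((1:ℝ)^2)⁻¹) • b) 1 := hBinv.smul_const b
  have hcurve : HasDerivAt (fun α : ℝ => α • a + α⁻¹ • b + c) (a - b) 1 := by
    have := (hA.add hB).add_const c
    refine HasDerivAt.congr_deriv this ?_
    simp [sub_eq_add_neg]
  have hF : HasFDerivAt L (fderiv ℝ L θ) θ := (hL θ).hasFDerivAt
  have hF' : HasFDerivAt L (fderiv ℝ L θ) ((1:ℝ) • a + (1:ℝ)⁻¹ • b + c) := by
    rwa [← hθ]
  have hcomp : HasDerivAt (fun α : ℝ => L (α • a + α⁻¹ • b + c)) (fderiv ℝ L θ (a - b)) 1 :=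
    hF'.comp_hasDerivAt 1 hcurve
  have hconst : HasDerivAt (fun α : ℝ => L (α • a + α⁻¹ • b + c)) 0 1 := by
    have hev : (fun α : ℝ => L (α • a + α⁻¹ • b + c)) =ᶠ[nhds (1:ℝ)]
        (fun _ => L θ) := by
      filter_upwards [eventually_gt_nhds (zero_lt_one)] with α hα
      rw [← hres α]; exact hinv θ α hα
    exact (hasDerivAt_const (1:ℝ) (L θ)).congr_of_eventuallyEq hev
  have hzero : fderiv ℝ L θ (a - b) = 0 := hcomp.unique hconst
  -- express fderiv via gradient
  have hgrad : HasGradientAt L g θ := (hL θ).hasGradientAt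
  have hfd : fderiv ℝ L θ = InnerProductSpace.toDual ℝ _ g := by
    exact (hgrad.hasFDerivAt).fderiv
  have hinner : inner ℝ g (a - b) = 0 := by
    have := hzero
    rw [hfd] at this
    simpa [InnerProductSpace.toDual_apply_apply] using this
  rw [PiLp.inner_apply] at hinner
  simp only [PiLp.sub_apply, RCLike.inner_apply, conj_trivial] at hinner
  -- identify the sums
  have hsa : ∑ e ∈ Finset.univ.filter (fun e : G.Edge => (e : G.V × G.V).2 = v),
      θ e * g e = ∑ e : G.Edge, g e * a e := by
    rw [Finset.sum_filter]
    refine Finset.sum_congr rfl fun e _ => ?_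
    by_cases h2 : (e : G.V × G.V).2 = v <;> simp [ha, h2, mul_comm]
  have hsb : ∑ e ∈ Finset.univ.filter (fun e : G.Edge => (e : G.V × G.V).1 = v),
      θ e * g e = ∑ e : G.Edge, g e * b e := by
    rw [Finset.sum_filter]
    refine Finset.sum_congr rfl fun e _ => ?_
    by_cases h1 : (e : G.V × G.V).1 = v
    · have h2 : (e : G.V × G.V).2 ≠ v := by
        intro h2
        apply G.acyclic v
        refine Relation.TransGen.single ?_
        have he := e.2
        have : (e : G.V × G.V) = (v, v) := Prod.ext h1 h2
        rwa [this] at he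
      simp [hb, h1, h2, mul_comm]
    · simp [hb, h1]
  rw [hsa, hsb, ← Finset.sum_sub_distrib]
  rw [← hinner]
  refine Finset.sum_congr rfl fun e _ => ?_
  ring
end
end

section
/- Suppose L : ℝ^E → ℝ is differentiable and satisfies L(T^v_α(θ)) = L(θ) for every hidden node v, every α > 0, and every θ ∈ ℝ^E. Let θ : ℝ → ℝ^E be a differentiable curve solving the gradient flow θ'(t) = −∇L(θ(t)) for all t ≥ 0. Then the balance vector is conserved: B̃(θ(t)²) = B̃(θ(0)²) for all t ≥ 0. -/
noncomputable section

open Matrix Finset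

lemma key_orth (G : DagNet) (L : EuclideanSpace ℝ G.Edge → ℝ)
    (hL : Differentiable ℝ L)
    (hinv : ∀ v ∈ G.hidden, ∀ α : ℝ, 0 < α → ∀ θ : EuclideanSpace ℝ G.Edge,
      L (G.rescale v α θ) = L θ)
    (v : G.Hidden) (x : EuclideanSpace ℝ G.Edge) :
    ∑ e, G.B v e * x e * gradient L x e = 0 := by
  classical
  set d : EuclideanSpace ℝ G.Edge := WithLp.toLp 2 (fun e => G.B v e * x e) with hd
  -- the curve α ↦ rescale v α x has derivative d at α = 1
  have hcomp : ∀ e : G.Edge, HasDerivAt (fun α : ℝ => G.rescale v α x e) (d e) 1 := by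
    intro e
    simp only [DagNet.rescale, DagNet.B, Matrix.of_apply, hd]
    by_cases h2 : (e : G.V × G.V).2 = (v : G.V)
    · simp only [h2, if_true]
      simpa using (hasDerivAt_id (1:ℝ)).mul_const (x e)
    · by_cases h1 : (e : G.V × G.V).1 = (v : G.V)
      · simp only [h2, h1, if_false, if_true]
        have : HasDerivAt (fun α : ℝ => α⁻¹) (-1 : ℝ) 1 := by
          simpa using hasDerivAt_inv (one_ne_zero (α := ℝ))
        simpa using this.mul_const (x e)
      · simp only [h2, h1, if_false]
        simpa using (hasDerivAt_const (1:ℝ) (x e))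
  have hφ : HasDerivAt (fun α : ℝ => G.rescale v α x) d 1 := by
    have hpi : HasDerivAt (fun α : ℝ => (fun e => G.rescale v α x e : G.Edge → ℝ))
        (fun e => d e) 1 := hasDerivAt_pi.2 hcomp
    exact ((EuclideanSpace.equiv G.Edge ℝ).symm.toContinuousLinearMap.hasFDerivAt.comp_hasDerivAt
      1 hpi :)
  have hone : G.rescale v 1 x = x := by
    ext e
    simp [DagNet.rescale]
  have hgrad : HasGradientAt L (gradient L x) x := (hL x).hasGradientAt
  have hLφ : HasDerivAt (fun α : ℝ => L (G.rescale v α x))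
      (InnerProductSpace.toDual ℝ _ (gradient L x) d) 1 := by
    have := hgrad.hasFDerivAt.comp_hasDerivAt_of_eq 1 hφ hone.symm
    exact this.congr_deriv (by simp)
  have hconst : HasDerivAt (fun α : ℝ => L (G.rescale v α x)) 0 1 := by
    have hev : (fun α : ℝ => L (G.rescale v α x)) =ᶠ[nhds (1:ℝ)] fun _ => L x := by
      filter_upwards [IsOpen.mem_nhds isOpen_Ioi (by norm_num : (1:ℝ) ∈ Set.Ioi (0:ℝ))]
        with α hα
      exact hinv v v.2 α hα x
    exact (hasDerivAt_const (1:ℝ) (L x)).congr_of_eventuallyEq hev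
  have h0 : (InnerProductSpace.toDual ℝ _ (gradient L x)) d = 0 := hLφ.unique hconst
  rw [InnerProductSpace.toDual_apply_apply, PiLp.inner_apply] at h0
  calc ∑ e, G.B v e * x e * gradient L x e
      = ∑ e, (inner ℝ (gradient L x e) (d e) : ℝ) := by
        refine Finset.sum_congr rfl fun e _ => ?_
        simp [hd, real_inner_comm]
    _ = 0 := h0


/-- under gradient flow for a loss invariant under all rescalings
at hidden nodes, the balance vector `B̃ θ(t)²` is conserved. -/
theorem statement1 (G : DagNet) (L : EuclideanSpace ℝ G.Edge → ℝ)
    (hL : Differentiable ℝ L)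
    (hinv : ∀ v ∈ G.hidden, ∀ α : ℝ, 0 < α → ∀ θ : EuclideanSpace ℝ G.Edge,
      L (G.rescale v α θ) = L θ)
    (θ : ℝ → EuclideanSpace ℝ G.Edge) (hθ : Differentiable ℝ θ)
    (hflow : ∀ t : ℝ, 0 ≤ t → HasDerivAt θ (-(gradient L (θ t))) t) :
    ∀ t : ℝ, 0 ≤ t →
      G.B.mulVec (fun e => θ t e ^ 2) = G.B.mulVec (fun e => θ 0 e ^ 2) := by
  classical
  intro t ht
  funext v
  set F : ℝ → ℝ := fun s => ∑ e, G.B v e * θ s e ^ 2 with hF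
  have hFval : ∀ s, F s = G.B.mulVec (fun e => θ s e ^ 2) v := by
    intro s; simp [hF, Matrix.mulVec, dotProduct]
  have hderiv : ∀ s : ℝ, 0 ≤ s → HasDerivAt F 0 s := by
    intro s hs
    have hco : ∀ e : G.Edge, HasDerivAt (fun u : ℝ => θ u e)
        (-(gradient L (θ s)) e) s := by
      intro e
      exact ((EuclideanSpace.proj e : EuclideanSpace ℝ G.Edge →L[ℝ] ℝ)).hasFDerivAt.comp_hasDerivAt
        s (hflow s hs)
    have hsum : HasDerivAt F (∑ e, G.B v e * (2 * θ s e * (-(gradient L (θ s)) e))) s := by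
      apply HasDerivAt.fun_sum
      intro e _
      have h2 := ((hco e).fun_pow 2).const_mul (G.B v e)
      refine h2.congr_deriv ?_
      push_cast
      ring
    have hzero : (∑ e, G.B v e * (2 * θ s e * (-(gradient L (θ s)) e))) = 0 := by
      have := key_orth G L hL hinv v (θ s)
      calc (∑ e, G.B v e * (2 * θ s e * (-(gradient L (θ s)) e)))
          = (-2) * ∑ e, G.B v e * θ s e * gradient L (θ s) e := by
            rw [Finset.mul_sum]; refine Finset.sum_congr rfl fun e _ => ?_
            simp only [PiLp.neg_apply]; ring
        _ = 0 := by rw [this]; ring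
    rwa [hzero] at hsum
  have hcont : ContinuousOn F (Set.Icc 0 t) := by
    apply Continuous.continuousOn
    apply continuous_finset_sum
    intro e _
    exact (continuous_const.mul (((EuclideanSpace.proj e).continuous.comp (hθ.continuous)).pow 2))
  have := constant_of_has_deriv_right_zero hcont (fun s hs =>
    (hderiv s hs.1).hasDerivWithinAt) t (Set.mem_Icc.2 ⟨ht, le_refl t⟩)
  rw [hFval t, hFval 0] at this
  exact this
end
end

section
/- Assume every hidden node of G lies on a directed path from an input node to an output node. Then for every c ∈ ℝ^{Ṽ}, the invariant set H_G(c) ⊆ ℝ^E is a connected subset of ℝ^E if and only if the following two conditions hold: (1) for every out-bottleneck v and every set T of pure ancestors of v that is stable by forward edges, Σ_{u∈T} c_u ≥ 0; and (2) for every in-bottleneck v and every set T of pure descendants of v that is stable by backward edges, Σ_{u∈T} c_u ≤ 0. -/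
noncomputable section

open Matrix Finset

open Finset

namespace DagAux

variable {I : Type*} [Fintype I]

/-- membership in the cone generated by a list of vectors, recursively. -/
def InCone : List (I → ℝ) → (I → ℝ) → Prop
  | [], b => b = 0
  | a :: tl, b => ∃ lam : ℝ, 0 ≤ lam ∧ InCone tl (b - lam • a)

lemma dot_sub_smul (x z v : I → ℝ) (s : ℝ) :
    (∑ k, (x k - s * z k) * v k) = (∑ k, x k * v k) - s * ∑ k, z k * v k := by
  rw [mul_sum, ← Finset.sum_sub_distrib]
  congr 1; ext k; ring

lemma dot_sub_smul' (y v a : I → ℝ) (s : ℝ) :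
    (∑ k, y k * (v k - s * a k)) = (∑ k, y k * v k) - s * ∑ k, y k * a k := by
  rw [mul_sum, ← Finset.sum_sub_distrib]
  congr 1; ext k; ring

/-- Key sublemma: pulling a cone membership through the "projection along `a`" map. -/
lemma incone_unproject (y a : I → ℝ) (ya : ℝ) (hya : 0 < ya) (hyaa : (∑ k, y k * a k) = ya) :
    ∀ (tl : List (I → ℝ)) (c : I → ℝ),
      (∀ v ∈ tl, (∑ k, y k * v k) ≤ 0) →
      InCone (tl.map (fun v => v - ((∑ k, y k * v k) / ya) • a)) c →
      ∃ mu : ℝ, mu ≤ 0 ∧ InCone tl (c + mu • a) := by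
  intro tl
  induction tl with
  | nil =>
    intro c _ hc
    refine ⟨0, le_rfl, ?_⟩
    simp only [InCone, List.map_nil] at hc ⊢
    simp [hc]
  | cons v tl ih =>
    intro c hdots hc
    obtain ⟨lam, hlam, hc'⟩ := hc
    obtain ⟨mu, hmu, hmem⟩ := ih (c - lam • (v - ((∑ k, y k * v k) / ya) • a))
      (fun w hw => hdots w (List.mem_cons_of_mem _ hw)) hc'
    refine ⟨mu + lam * (∑ k, y k * v k) / ya, ?_, ?_⟩
    · have h1 : lam * (∑ k, y k * v k) / ya ≤ 0 := by
        have := hdots v List.mem_cons_self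
        have : lam * (∑ k, y k * v k) ≤ 0 := mul_nonpos_of_nonneg_of_nonpos hlam this
        exact div_nonpos_of_nonpos_of_nonneg this hya.le
      linarith
    · refine ⟨lam, hlam, ?_⟩
      have heq : c + (mu + lam * (∑ k, y k * v k) / ya) • a - lam • v
          = c - lam • (v - ((∑ k, y k * v k) / ya) • a) + mu • a := by
        ext k
        simp only [Pi.add_apply, Pi.sub_apply, Pi.smul_apply, smul_eq_mul]
        ring
      rw [heq]
      exact hmem

/-- Farkas' lemma, list form. -/
lemma farkas_list : ∀ (n : ℕ) (vs : List (I → ℝ)), vs.length = n → ∀ b : I → ℝ,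
    InCone vs b ∨
    (∃ y : I → ℝ, (∀ v ∈ vs, (∑ k, y k * v k) ≤ 0) ∧ 0 < ∑ k, y k * b k) := by
  intro n
  induction n with
  | zero =>
    intro vs hvs b
    rcases List.length_eq_zero_iff.mp hvs with rfl
    by_cases hb : b = 0
    · exact Or.inl hb
    · right
      refine ⟨b, by simp, ?_⟩
      have hex : ∃ k, b k ≠ 0 := by
        by_contra h; push_neg at h; exact hb (funext h)
      obtain ⟨k, hk⟩ := hex
      exact Finset.sum_pos' (fun j _ => mul_self_nonneg _) ⟨k, Finset.mem_univ k, mul_self_pos.mpr hk⟩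
  | succ n ih =>
    rintro vs hvs b
    rcases vs with _ | ⟨a, tl⟩
    · simp at hvs
    have htl : tl.length = n := by simpa using hvs
    rcases ih tl htl b with hInC | ⟨y, hy, hyb⟩
    · left
      exact ⟨0, le_rfl, by simpa using hInC⟩
    by_cases hya : (∑ k, y k * a k) ≤ 0
    · right
      refine ⟨y, ?_, hyb⟩
      intro v hv
      rcases List.mem_cons.mp hv with rfl | hv
      · exact hya
      · exact hy v hv
    push_neg at hya
    set ya := ∑ k, y k * a k with hya_def
    set f : (I → ℝ) → (I → ℝ) := fun v => v - ((∑ k, y k * v k) / ya) • a with hf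
    rcases ih (tl.map f) (by simpa using htl) (f b) with hInC | ⟨y', hy', hy'b⟩
    · -- unproject to get membership for a :: tl
      obtain ⟨mu, hmu, hmem⟩ := incone_unproject y a ya hya rfl tl (f b) hy hInC
      left
      refine ⟨(∑ k, y k * b k) / ya - mu, ?_, ?_⟩
      · have h1 : 0 < (∑ k, y k * b k) / ya := div_pos hyb hya
        linarith
      · have heq : b - ((∑ k, y k * b k) / ya - mu) • a = f b + mu • a := by
          ext k
          simp only [hf, Pi.add_apply, Pi.sub_apply, Pi.smul_apply, smul_eq_mul]
          ring
        rw [heq]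
        exact hmem
    · -- build new certificate
      right
      set s : ℝ := (∑ k, y' k * a k) / ya with hs
      refine ⟨fun k => y' k - s * y k, ?_, ?_⟩
      · intro v hv
        rcases List.mem_cons.mp hv with rfl | hv
        · rw [dot_sub_smul]
          rw [hs, div_mul_cancel₀ _ hya.ne']
          simp
        · rw [dot_sub_smul]
          have h2 := hy' (f v) (List.mem_map_of_mem hv)
          rw [hf] at h2
          simp only [Pi.sub_apply, Pi.smul_apply, smul_eq_mul] at h2
          rw [dot_sub_smul'] at h2
          have hcomm : s * (∑ k, y k * v k) = ((∑ k, y k * v k) / ya) * (∑ k, y' k * a k) := by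
            rw [hs]; field_simp
          rw [hcomm]
          linarith
      · rw [dot_sub_smul]
        have h2 := hy'b
        rw [hf] at h2
        simp only [Pi.sub_apply, Pi.smul_apply, smul_eq_mul] at h2
        rw [dot_sub_smul'] at h2
        have hcomm : s * (∑ k, y k * b k) = ((∑ k, y k * b k) / ya) * (∑ k, y' k * a k) := by
          rw [hs]; field_simp
        rw [hcomm]
        linarith



lemma incone_to_coeffs {J : Type*} [Fintype J] [DecidableEq J] (A : I → J → ℝ) :
    ∀ (l : List J) (b : I → ℝ), InCone (l.map (fun j => fun i => A i j)) b →
      ∃ x : J → ℝ, (∀ j, 0 ≤ x j) ∧ ∀ i, (∑ j, A i j * x j) = b i := by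
  intro l
  induction l with
  | nil =>
    intro b hb
    refine ⟨0, fun j => le_rfl, fun i => ?_⟩
    simp only [InCone, List.map_nil] at hb
    simp [hb]
  | cons j l ih =>
    intro b hb
    obtain ⟨lam, hlam, hmem⟩ := hb
    obtain ⟨x, hx0, hx⟩ := ih _ hmem
    refine ⟨fun j' => x j' + if j' = j then lam else 0, ?_, ?_⟩
    · intro j'
      by_cases h : j' = j
      · simp only [h, if_true]
        exact add_nonneg (hx0 j) hlam
      · simpa [h] using hx0 j'
    · intro i
      have h1 := hx i
      simp only [Pi.sub_apply, Pi.smul_apply, smul_eq_mul] at h1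
      have h2 : (∑ j', A i j' * (x j' + if j' = j then lam else 0))
          = (∑ j', A i j' * x j') + ∑ j', (if j' = j then A i j' * lam else 0) := by
        rw [← Finset.sum_add_distrib]
        congr 1; ext j'
        by_cases h : j' = j <;> simp [h] <;> ring
      rw [h2, Finset.sum_ite_eq' Finset.univ j (fun j' => A i j' * lam)]
      simp only [Finset.mem_univ, if_true]
      linarith

/-- Farkas' lemma for a finite system `A x = b`, `x ≥ 0`. -/
lemma farkas_cols {J : Type*} [Fintype J] [DecidableEq J] (A : I → J → ℝ) (b : I → ℝ) :
    (∃ x : J → ℝ, (∀ j, 0 ≤ x j) ∧ ∀ i, (∑ j, A i j * x j) = b i) ∨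
    (∃ y : I → ℝ, (∀ j, (∑ k, y k * A k j) ≤ 0) ∧ 0 < ∑ k, y k * b k) := by
  rcases farkas_list ((Finset.univ : Finset J).toList.map (fun j => fun i => A i j)).length
      _ rfl b with h | ⟨y, hy, hyb⟩
  · exact Or.inl (incone_to_coeffs A _ b h)
  · right
    refine ⟨y, fun j => ?_, hyb⟩
    exact hy _ (List.mem_map_of_mem (Finset.mem_toList.mpr (Finset.mem_univ j)))

end DagAux

namespace DagNet

variable {G : DagNet}

lemma edge_ne {a b : G.V} (h : (a, b) ∈ G.edges) : a ≠ b := by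
  rintro rfl
  exact G.acyclic a (Relation.TransGen.single h)

lemma hidden_not_VI {v : G.V} (h : v ∈ G.hidden) : v ∉ G.VI := by
  simp only [hidden, Finset.mem_sdiff, Finset.mem_union] at h
  tauto

lemma hidden_not_VO {v : G.V} (h : v ∈ G.hidden) : v ∉ G.VO := by
  simp only [hidden, Finset.mem_sdiff, Finset.mem_union] at h
  tauto

lemma mem_hidden_of {v : G.V} (h1 : v ∉ G.VI) (h2 : v ∉ G.VO) : v ∈ G.hidden := by
  simp only [hidden, Finset.mem_sdiff, Finset.mem_union]
  exact ⟨Finset.mem_univ v, by tauto⟩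

/-- Directed walks in `G`. -/
inductive Walk (G : DagNet) : G.V → G.V → Type where
  | nil (a : G.V) : Walk G a a
  | cons {a b c : G.V} (h : (a, b) ∈ G.edges) (p : Walk G b c) : Walk G a c

namespace Walk

/-- the pairs of consecutive vertices used by a walk -/
def uses {a b : G.V} : Walk G a b → G.V × G.V → Prop
  | .nil _, _ => False
  | .cons (a := a) (b := b') _ q, pr => (a, b') = pr ∨ q.uses pr

def wappend {a b c : G.V} : Walk G a b → Walk G b c → Walk G a c
  | .nil _, q => q
  | .cons h p, q => .cons h (p.wappend q)

lemma uses_wappend {a b c : G.V} (p : Walk G a b) (q : Walk G b c) (pr : G.V × G.V) :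
    (p.wappend q).uses pr ↔ p.uses pr ∨ q.uses pr := by
  induction p with
  | nil => simp [wappend, uses]
  | cons h p ih => simp [wappend, uses, ih, or_assoc]

lemma uses_cons_iff {a b z : G.V} (h : (a, b) ∈ G.edges) (p : Walk G b z)
    (pr : G.V × G.V) : (Walk.cons h p).uses pr ↔ (a, b) = pr ∨ p.uses pr := Iff.rfl

lemma uses_mem_edges {a b : G.V} (p : Walk G a b) {pr : G.V × G.V} (h : p.uses pr) :
    pr ∈ G.edges := by
  induction p with
  | nil => exact h.elim
  | cons h' p ih =>
    rcases h with rfl | h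
    · exact h'
    · exact ih h

lemma toReaches {a b : G.V} (p : Walk G a b) : G.Reaches a b := by
  induction p with
  | nil => exact Relation.ReflTransGen.refl
  | cons h p ih => exact Relation.ReflTransGen.head h ih

lemma ofReaches {a b : G.V} (h : G.Reaches a b) : Nonempty (Walk G a b) := by
  induction h using Relation.ReflTransGen.head_induction_on with
  | refl => exact ⟨.nil b⟩
  | head h _ ih => exact ⟨.cons h ih.some⟩

lemma uses_split {x z : G.V} (p : Walk G x z) {pr : G.V × G.V} (h : p.uses pr) :
    Nonempty (Walk G x pr.1) ∧ Nonempty (Walk G pr.2 z) := by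
  induction p with
  | nil => exact h.elim
  | cons h' p ih =>
    rcases h with rfl | h
    · exact ⟨⟨.nil _⟩, ⟨p⟩⟩
    · obtain ⟨⟨w1⟩, hw2⟩ := ih h
      exact ⟨⟨.cons h' w1⟩, hw2⟩

/-- A walk starting at `b` cannot use an edge pointing into `b`. -/
lemma not_uses_into_start {a b z : G.V} (hab : (a, b) ∈ G.edges) (p : Walk G b z) :
    ¬ p.uses (a, b) := by
  intro h
  obtain ⟨⟨w1⟩, -⟩ := p.uses_split h
  exact G.acyclic b (Relation.TransGen.tail' w1.toReaches hab)

/-- A walk ending at `a` cannot use an edge leaving `a`. -/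
lemma not_uses_from_end {a b x : G.V} (hab : (a, b) ∈ G.edges) (p : Walk G x a) :
    ¬ p.uses (a, b) := by
  intro h
  obtain ⟨-, ⟨w2⟩⟩ := p.uses_split h
  exact G.acyclic a (Relation.TransGen.head' hab w2.toReaches)

/-- telescoping a monotone function along a walk avoiding a fixed pair `e₀`. -/
lemma mono {e₀ : G.V × G.V} {yhat : G.V → ℝ}
    (hmono : ∀ f ∈ G.edges, f ≠ e₀ → yhat f.2 ≤ yhat f.1)
    {a b : G.V} (p : Walk G a b) (h : ¬ p.uses e₀) : yhat b ≤ yhat a := by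
  induction p with
  | nil => exact le_rfl
  | cons h' p ih =>
    simp only [uses] at h
    push_neg at h
    exact le_trans (ih h.2) (hmono _ h' h.1)

/-- The unit flow along a walk. -/
def flow {a b : G.V} : Walk G a b → (G.Edge → ℝ)
  | .nil _ => 0
  | .cons (a := a) (b := b') _ q => (fun f : G.Edge => if (f : G.V × G.V) = (a, b') then (1:ℝ) else 0) + q.flow

lemma flow_nonneg {a b : G.V} (p : Walk G a b) (f : G.Edge) : 0 ≤ p.flow f := by
  induction p with
  | nil => simp [flow]
  | cons h p ih =>
    simp only [flow, Pi.add_apply]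
    split <;> linarith

lemma mulVec_flow {a b : G.V} (p : Walk G a b) (v : G.Hidden) :
    G.B.mulVec p.flow v
      = (if b = (v : G.V) then 1 else 0) - (if a = (v : G.V) then 1 else 0) := by
  induction p with
  | nil => simp [flow, Matrix.mulVec, dotProduct]
  | cons h p ih =>
    rename_i x y z
    have hxy : x ≠ y := edge_ne h
    have hsingle : G.B.mulVec (fun f : G.Edge => if (f : G.V × G.V) = (x, y) then (1:ℝ) else 0) v
        = (if y = (v : G.V) then 1 else 0) - (if x = (v : G.V) then 1 else 0) := by
      have : ∀ f : G.Edge, ((f : G.V × G.V) = (x, y)) ↔ (f = ⟨(x, y), h⟩) := by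
        intro f; constructor
        · intro hf; exact Subtype.ext hf
        · rintro rfl; rfl
      simp only [Matrix.mulVec, dotProduct, this]
      rw [Finset.sum_congr rfl (fun f _ => by rw [mul_ite, mul_one, mul_zero]),
        Finset.sum_ite_eq' Finset.univ (⟨(x, y), h⟩ : G.Edge) (fun f => G.B v f)]
      simp only [Finset.mem_univ, if_true, B, Matrix.of_apply]
      by_cases h1 : y = (v : G.V) <;> by_cases h2 : x = (v : G.V)
      · exact absurd (h2.trans h1.symm) hxy
      · simp [h1, h2]
      · simp [h1, h2]
      · simp [h1, h2]
    have hadd : G.B.mulVec ((fun f : G.Edge => if (f : G.V × G.V) = (x, y) then (1:ℝ) else 0) + p.flow) v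
        = G.B.mulVec (fun f : G.Edge => if (f : G.V × G.V) = (x, y) then (1:ℝ) else 0) v
          + G.B.mulVec p.flow v := by
      simp [Matrix.mulVec, dotProduct, mul_add, Finset.sum_add_distrib]
    simp only [flow]
    rw [hadd, hsingle, ih]
    ring

end Walk

end DagNet


namespace DagNet

variable {G : DagNet}

/-- The polytope `P(c) = {x ≥ 0 : B̃ x = c}`. -/
def Pset (G : DagNet) (c : G.Hidden → ℝ) : Set (G.Edge → ℝ) :=
  {x | (∀ f, 0 ≤ x f) ∧ G.B.mulVec x = c}

lemma mulVec_apply' (x : G.Edge → ℝ) (v : G.Hidden) :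
    G.B.mulVec x v = ∑ f, G.B v f * x f := rfl

lemma Pset_nonempty
    (hpath : ∀ v ∈ G.hidden, ∃ i ∈ G.VI, ∃ o ∈ G.VO, G.Reaches i v ∧ G.Reaches v o)
    (c : G.Hidden → ℝ) : (G.Pset c).Nonempty := by
  have h1 : ∀ v : G.Hidden, ∃ gv : G.Edge → ℝ, (∀ f, 0 ≤ gv f) ∧
      ∀ w : G.Hidden, G.B.mulVec gv w = (if v = w then c v else 0) := by
    intro v
    obtain ⟨i, hi, o, ho, hiv, hvo⟩ := hpath (v : G.V) v.2
    obtain ⟨w1⟩ := Walk.ofReaches hiv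
    obtain ⟨w2⟩ := Walk.ofReaches hvo
    by_cases hc : 0 ≤ c v
    · refine ⟨fun f => c v * w1.flow f, fun f => mul_nonneg hc (w1.flow_nonneg f), fun w => ?_⟩
      have : G.B.mulVec (fun f => c v * w1.flow f) w = c v * G.B.mulVec w1.flow w := by
        simp only [mulVec_apply', Finset.mul_sum]
        congr 1; ext f; ring
      rw [this, Walk.mulVec_flow]
      have hiw : i ≠ (w : G.V) := fun h => hidden_not_VI w.2 (h ▸ hi)
      have hvw : ((v:G.V) = (w:G.V)) ↔ v = w := Subtype.coe_inj
      by_cases h : v = w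
      · simp [h, hiw]
      · have : ¬((v:G.V) = (w:G.V)) := fun hh => h (Subtype.coe_inj.mp hh)
        simp [hiw, h, this]
    · refine ⟨fun f => (-(c v)) * w2.flow f,
        fun f => mul_nonneg (by linarith) (w2.flow_nonneg f), fun w => ?_⟩
      have : G.B.mulVec (fun f => (-(c v)) * w2.flow f) w = (-(c v)) * G.B.mulVec w2.flow w := by
        simp only [mulVec_apply', Finset.mul_sum]
        congr 1; ext f; ring
      rw [this, Walk.mulVec_flow]
      have how : o ≠ (w : G.V) := fun h => hidden_not_VO w.2 (h ▸ ho)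
      by_cases h : v = w
      · simp [h, how]
      · have : ¬((v:G.V) = (w:G.V)) := fun hh => h (Subtype.coe_inj.mp hh)
        simp [how, h, this]
  choose g hg0 hgB using h1
  refine ⟨∑ v, g v, fun f => ?_, ?_⟩
  · rw [Finset.sum_apply]
    exact Finset.sum_nonneg fun v _ => hg0 v f
  · funext w
    have : G.B.mulVec (∑ v, g v) w = ∑ v, G.B.mulVec (g v) w := by
      simp only [mulVec_apply', Finset.sum_apply, Finset.mul_sum]
      exact Finset.sum_comm
    rw [this]
    simp only [hgB]
    simp [Finset.sum_ite_eq' Finset.univ w (fun v => c v)]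

end DagNet


namespace DagNet

variable {G : DagNet}

/-- sign-pattern square-root maps from the polytope into the invariant set -/
def pieceMap (σ : G.Edge → Bool) (x : G.Edge → ℝ) : EuclideanSpace ℝ G.Edge :=
  WithLp.toLp 2 fun f => (if σ f then (1:ℝ) else -1) * Real.sqrt (x f)

lemma pieceMap_continuous (σ : G.Edge → Bool) : Continuous (pieceMap (G := G) σ) :=
  (PiLp.continuous_toLp ..).comp <| continuous_pi fun f =>
    continuous_const.mul (Real.continuous_sqrt.comp (continuous_apply f))

lemma sq_pieceMap {σ : G.Edge → Bool} {x : G.Edge → ℝ} (hx : ∀ f, 0 ≤ x f) (f : G.Edge) :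
    (pieceMap σ x f) ^ 2 = x f := by
  unfold pieceMap
  by_cases h : σ f <;> simp [h, mul_pow, neg_one_sq, Real.sq_sqrt (hx f)]

lemma pieceMap_mem_inv {c : G.Hidden → ℝ} {σ : G.Edge → Bool} {x : G.Edge → ℝ}
    (hx : x ∈ G.Pset c) : pieceMap σ x ∈ G.invariantSet c := by
  show G.B.mulVec (fun f => (pieceMap σ x f) ^ 2) = c
  have : (fun f => (pieceMap σ x f) ^ 2) = x := funext (sq_pieceMap hx.1)
  rw [this]
  exact hx.2

lemma exists_pieceMap {c : G.Hidden → ℝ} {θ : EuclideanSpace ℝ G.Edge}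
    (hθ : θ ∈ G.invariantSet c) :
    ∃ σ : G.Edge → Bool, (fun f => θ f ^ 2) ∈ G.Pset c ∧ pieceMap σ (fun f => θ f ^ 2) = θ := by
  classical
  refine ⟨fun f => if 0 ≤ θ f then true else false, ⟨fun f => sq_nonneg _, hθ⟩, ?_⟩
  ext f
  unfold pieceMap
  simp only [PiLp.toLp_apply]
  rw [Real.sqrt_sq_eq_abs]
  by_cases h : 0 ≤ θ f
  · simp [h, abs_of_nonneg h]
  · push_neg at h
    simp [not_le.mpr h, abs_of_neg h]

lemma Pset_convex (c : G.Hidden → ℝ) : Convex ℝ (G.Pset c) := by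
  rintro x ⟨hx0, hxB⟩ y ⟨hy0, hyB⟩ a b ha hb hab
  refine ⟨fun f => add_nonneg (mul_nonneg ha (hx0 f)) (mul_nonneg hb (hy0 f)), ?_⟩
  funext v
  have hxv := congrFun hxB v
  have hyv := congrFun hyB v
  simp only [mulVec_apply'] at hxv hyv ⊢
  have : ∑ f, G.B v f * (a • x + b • y) f = a * ∑ f, G.B v f * x f + b * ∑ f, G.B v f * y f := by
    rw [Finset.mul_sum, Finset.mul_sum, ← Finset.sum_add_distrib]
    congr 1; ext f
    simp only [Pi.add_apply, Pi.smul_apply, smul_eq_mul]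
    ring
  rw [this, hxv, hyv, ← add_mul, hab, one_mul]

lemma connected_of_feasible {c : G.Hidden → ℝ} (hne : (G.Pset c).Nonempty)
    (hfeas : ∀ e : G.Edge, ∃ x ∈ G.Pset c, x e = 0) :
    IsConnected (G.invariantSet c) := by
  classical
  obtain ⟨x₀, hx₀⟩ := hne
  set H := G.invariantSet c with hH
  set p : EuclideanSpace ℝ G.Edge := pieceMap (fun _ => true) x₀ with hp
  have hpH : p ∈ H := pieceMap_mem_inv hx₀
  have hpiece : ∀ σ : G.Edge → Bool, IsPreconnected (pieceMap σ '' G.Pset c) := fun σ =>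
    (Pset_convex c).isPreconnected.image _ (pieceMap_continuous σ).continuousOn
  have hsub : ∀ σ : G.Edge → Bool, pieceMap σ '' G.Pset c ⊆ H := by
    rintro σ _ ⟨x, hx, rfl⟩
    exact pieceMap_mem_inv hx
  have main : ∀ (n : ℕ) (σ : G.Edge → Bool),
      (Finset.univ.filter (fun f => σ f = false)).card ≤ n →
      pieceMap σ '' G.Pset c ⊆ connectedComponentIn H p := by
    intro n
    induction n with
    | zero =>
      intro σ hσ
      have hσt : σ = fun _ => true := by
        funext f
        by_contra h
        have hf : σ f = false := by
          cases hσf : σ f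
          · rfl
          · exact absurd hσf h
        have : f ∈ Finset.univ.filter (fun f => σ f = false) := by
          simp [hf]
        have := Finset.card_pos.mpr ⟨f, this⟩
        omega
      subst hσt
      exact (hpiece _).subset_connectedComponentIn (Set.mem_image_of_mem _ hx₀) (hsub _)
    | succ n ih =>
      intro σ hσ
      by_cases hn : (Finset.univ.filter (fun f => σ f = false)).card ≤ n
      · exact ih σ hn
      · push_neg at hn
        have hpos : 0 < (Finset.univ.filter (fun f => σ f = false)).card := by omega
        obtain ⟨e, he⟩ := Finset.card_pos.mp hpos
        have hee : σ e = false := (Finset.mem_filter.mp he).2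
        set σ' : G.Edge → Bool := fun f => if f = e then true else σ f with hσ'
        have hcard : (Finset.univ.filter (fun f => σ' f = false)).card ≤ n := by
          have hset : Finset.univ.filter (fun f => σ' f = false)
              = (Finset.univ.filter (fun f => σ f = false)).erase e := by
            ext f
            simp only [Finset.mem_filter, Finset.mem_erase, Finset.mem_univ, true_and, hσ']
            by_cases hf : f = e <;> simp [hf]
          rw [hset, Finset.card_erase_of_mem he]
          omega
        obtain ⟨z, hz, hze⟩ := hfeas e
        have hq : pieceMap σ z = pieceMap σ' z := by
          ext f
          by_cases hf : f = e
          · subst hf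
            simp [pieceMap, hze]
          · simp [pieceMap, hσ', hf]
        have hq2 : pieceMap σ z ∈ connectedComponentIn H p := by
          rw [hq]
          exact ih σ' hcard (Set.mem_image_of_mem _ hz)
        rw [connectedComponentIn_eq hq2]
        exact (hpiece σ).subset_connectedComponentIn (Set.mem_image_of_mem _ hz) (hsub σ)
  have hHsub : H ⊆ connectedComponentIn H p := by
    intro θ hθ
    obtain ⟨σ, hmem, hσ⟩ := exists_pieceMap hθ
    exact main _ σ le_rfl ⟨_, hmem, hσ⟩
  refine ⟨⟨p, hpH⟩, ?_⟩
  have heq : H = connectedComponentIn H p :=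
    le_antisymm hHsub (connectedComponentIn_subset _ _)
  show IsPreconnected H
  rw [heq]
  exact isPreconnected_connectedComponentIn

lemma feasible_of_connected {c : G.Hidden → ℝ} (hconn : IsConnected (G.invariantSet c))
    (e : G.Edge) : ∃ x ∈ G.Pset c, x e = 0 := by
  classical
  by_contra hcon
  push_neg at hcon
  obtain ⟨θ, hθ⟩ := hconn.nonempty
  have hsq : ∀ ψ : EuclideanSpace ℝ G.Edge, ψ ∈ G.invariantSet c →
      (fun f => ψ f ^ 2) ∈ G.Pset c := fun ψ h => ⟨fun f => sq_nonneg _, h⟩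
  have hne0 : ∀ ψ ∈ G.invariantSet c, ψ e ≠ 0 := by
    intro ψ h h0
    exact hcon _ (hsq ψ h) (by simp [h0])
  obtain ⟨flip, hflip, hflipe⟩ : ∃ ψ ∈ G.invariantSet c, ψ e = -θ e := by
    refine ⟨WithLp.toLp 2 fun f => if f = e then -θ f else θ f, ?_, by simp⟩
    show G.B.mulVec _ = c
    have : (fun f => ((WithLp.toLp 2 fun f => if f = e then -θ f else θ f : EuclideanSpace ℝ G.Edge) f) ^ 2) = fun f => θ f ^ 2 := by
      funext f
      by_cases hf : f = e
      · simp only [PiLp.toLp_apply, if_pos hf]; ring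
      · simp only [PiLp.toLp_apply, if_neg hf]
    rw [this]
    exact hθ
  have hev : Continuous (fun ψ : EuclideanSpace ℝ G.Edge => ψ e) := (continuous_apply e).comp (PiLp.continuous_ofLp ..)
  have hU : IsOpen {ψ : EuclideanSpace ℝ G.Edge | ψ e < 0} :=
    isOpen_lt hev continuous_const
  have hV : IsOpen {ψ : EuclideanSpace ℝ G.Edge | 0 < ψ e} :=
    isOpen_lt continuous_const hev
  have hcover : G.invariantSet c ⊆ {ψ : EuclideanSpace ℝ G.Edge | ψ e < 0}
      ∪ {ψ : EuclideanSpace ℝ G.Edge | 0 < ψ e} := by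
    intro ψ hψ
    rcases lt_or_gt_of_ne (hne0 ψ hψ) with h | h
    · exact Or.inl h
    · exact Or.inr h
  have hUne : (G.invariantSet c ∩ {ψ : EuclideanSpace ℝ G.Edge | ψ e < 0}).Nonempty := by
    rcases lt_or_gt_of_ne (hne0 θ hθ) with h | h
    · exact ⟨θ, hθ, h⟩
    · exact ⟨flip, hflip, by simp only [Set.mem_setOf_eq, hflipe]; linarith⟩
  have hVne : (G.invariantSet c ∩ {ψ : EuclideanSpace ℝ G.Edge | 0 < ψ e}).Nonempty := by
    rcases lt_or_gt_of_ne (hne0 θ hθ) with h | h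
    · exact ⟨flip, hflip, by simp only [Set.mem_setOf_eq, hflipe]; linarith⟩
    · exact ⟨θ, hθ, h⟩
  obtain ⟨ψ, -, hψ1, hψ2⟩ := hconn.isPreconnected _ _ hU hV hcover hUne hVne
  simp only [Set.mem_setOf_eq] at hψ1 hψ2
  linarith

end DagNet


namespace DagNet

variable {G : DagNet}

lemma edge_fst_ne_snd (f : G.Edge) : (f : G.V × G.V).1 ≠ (f : G.V × G.V).2 := by
  have hmem : ((f : G.V × G.V).1, (f : G.V × G.V).2) ∈ G.edges := by
    rw [Prod.mk.eta]; exact f.prop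
  exact edge_ne hmem

lemma B_apply_edge (f : G.Edge) (u : G.Hidden) :
    G.B u f = (if (f : G.V × G.V).2 = (u : G.V) then (1:ℝ) else 0)
      - (if (f : G.V × G.V).1 = (u : G.V) then (1:ℝ) else 0) := by
  have hne := edge_fst_ne_snd f
  show (if (f : G.V × G.V).2 = (u : G.V) then (1:ℝ)
      else if (f : G.V × G.V).1 = (u : G.V) then -1 else 0) = _
  by_cases h1 : (f : G.V × G.V).2 = (u : G.V) <;> by_cases h2 : (f : G.V × G.V).1 = (u : G.V)
  · exact absurd (h2.trans h1.symm) hne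
  · simp [h1, h2]
  · simp [h1, h2]
  · simp [h1, h2]

open Classical in
lemma sum_indicator_T (T : Finset G.Hidden) (w : G.V) :
    ∑ u ∈ T, (if w = (u : G.V) then (1:ℝ) else 0)
      = if ∃ hw : w ∈ G.hidden, (⟨w, hw⟩ : G.Hidden) ∈ T then (1:ℝ) else 0 := by
  by_cases hex : ∃ hw : w ∈ G.hidden, (⟨w, hw⟩ : G.Hidden) ∈ T
  · obtain ⟨hw, hT⟩ := hex
    have hrw : ∀ u : G.Hidden, (w = (u : G.V)) ↔ (u = (⟨w, hw⟩ : G.Hidden)) := by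
      intro u
      rw [Subtype.ext_iff]
      exact ⟨fun h => h.symm, fun h => h.symm⟩
    rw [Finset.sum_congr rfl (fun u _ => by rw [if_congr (hrw u) rfl rfl]),
      Finset.sum_ite_eq' T (⟨w, hw⟩ : G.Hidden) (fun _ => (1:ℝ)), if_pos hT,
      if_pos ⟨hw, hT⟩]
  · rw [if_neg hex]
    refine Finset.sum_eq_zero fun u hu => ?_
    rw [if_neg]
    intro h
    refine hex ⟨h ▸ u.2, ?_⟩
    have : (⟨w, h ▸ u.2⟩ : G.Hidden) = u := Subtype.ext h
    rwa [this]

open Classical in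
lemma sum_B_over_T (T : Finset G.Hidden) (x : G.Edge → ℝ) :
    ∑ u ∈ T, G.B.mulVec x u
      = ∑ f : G.Edge,
          ((if ∃ hw : (f : G.V × G.V).2 ∈ G.hidden, (⟨(f : G.V × G.V).2, hw⟩ : G.Hidden) ∈ T
              then (1:ℝ) else 0)
            - (if ∃ hw : (f : G.V × G.V).1 ∈ G.hidden, (⟨(f : G.V × G.V).1, hw⟩ : G.Hidden) ∈ T
              then (1:ℝ) else 0)) * x f := by
  simp only [mulVec_apply']
  rw [Finset.sum_comm]
  refine Finset.sum_congr rfl fun f _ => ?_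
  rw [← Finset.sum_mul]
  congr 1
  rw [Finset.sum_congr rfl (fun u _ => B_apply_edge f u), Finset.sum_sub_distrib,
    sum_indicator_T, sum_indicator_T]

end DagNet


namespace DagNet

variable {G : DagNet}

open Classical in
lemma cond1_of_feasible {c : G.Hidden → ℝ}
    (hfeas : ∀ e : G.Edge, ∃ x ∈ G.Pset c, x e = 0) :
    ∀ v : G.V, G.OutBottleneck v → ∀ T : Finset G.Hidden,
      (∀ u ∈ T, (u : G.V) ∈ G.pureAnc v) →
      (∀ u ∈ T, (u : G.V) ≠ v → ∀ w : G.V, ((u : G.V), w) ∈ G.edges →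
        ∃ hw : w ∈ G.hidden, (⟨w, hw⟩ : G.Hidden) ∈ T) →
      0 ≤ ∑ u ∈ T, c u := by
  intro v hv T _ hTstab
  obtain ⟨hvhid, hcard⟩ := hv
  obtain ⟨e0, he0⟩ := Finset.card_eq_one.mp hcard
  have he0mem : e0 ∈ G.edges ∧ e0.1 = v := by
    have h := he0 ▸ Finset.mem_singleton_self e0
    exact ⟨(Finset.mem_filter.mp h).1, (Finset.mem_filter.mp h).2⟩
  obtain ⟨x, hx, hxe⟩ := hfeas ⟨e0, he0mem.1⟩
  have hsum : ∑ u ∈ T, c u = ∑ u ∈ T, G.B.mulVec x u :=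
    Finset.sum_congr rfl fun u _ => by rw [hx.2]
  rw [hsum, sum_B_over_T]
  refine Finset.sum_nonneg fun f _ => ?_
  by_cases hf : f = (⟨e0, he0mem.1⟩ : G.Edge)
  · rw [hf, hxe, mul_zero]
  · by_cases h1 : ∃ hw : (f : G.V × G.V).1 ∈ G.hidden,
        (⟨(f : G.V × G.V).1, hw⟩ : G.Hidden) ∈ T
    · obtain ⟨hw1, h1T⟩ := h1
      by_cases hfv : (f : G.V × G.V).1 = v
      · exfalso
        have hmem : (f : G.V × G.V) ∈ G.edges.filter (fun e => e.1 = v) :=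
          Finset.mem_filter.mpr ⟨f.prop, hfv⟩
        rw [he0] at hmem
        exact hf (Subtype.ext (Finset.mem_singleton.mp hmem))
      · obtain ⟨hw2, h2T⟩ := hTstab ⟨(f : G.V × G.V).1, hw1⟩ h1T hfv (f : G.V × G.V).2
          (by rw [Prod.mk.eta]; exact f.prop)
        rw [if_pos ⟨hw2, h2T⟩, if_pos ⟨hw1, h1T⟩, sub_self, zero_mul]
    · rw [if_neg h1, sub_zero]
      by_cases h2 : ∃ hw : (f : G.V × G.V).2 ∈ G.hidden,
          (⟨(f : G.V × G.V).2, hw⟩ : G.Hidden) ∈ T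
      · rw [if_pos h2, one_mul]; exact hx.1 f
      · rw [if_neg h2, zero_mul]

open Classical in
lemma cond2_of_feasible {c : G.Hidden → ℝ}
    (hfeas : ∀ e : G.Edge, ∃ x ∈ G.Pset c, x e = 0) :
    ∀ v : G.V, G.InBottleneck v → ∀ T : Finset G.Hidden,
      (∀ u ∈ T, (u : G.V) ∈ G.pureDesc v) →
      (∀ u ∈ T, (u : G.V) ≠ v → ∀ w : G.V, (w, (u : G.V)) ∈ G.edges →
        ∃ hw : w ∈ G.hidden, (⟨w, hw⟩ : G.Hidden) ∈ T) →
      ∑ u ∈ T, c u ≤ 0 := by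
  intro v hv T _ hTstab
  obtain ⟨hvhid, hcard⟩ := hv
  obtain ⟨e0, he0⟩ := Finset.card_eq_one.mp hcard
  have he0mem : e0 ∈ G.edges ∧ e0.2 = v := by
    have h := he0 ▸ Finset.mem_singleton_self e0
    exact ⟨(Finset.mem_filter.mp h).1, (Finset.mem_filter.mp h).2⟩
  obtain ⟨x, hx, hxe⟩ := hfeas ⟨e0, he0mem.1⟩
  have hsum : ∑ u ∈ T, c u = ∑ u ∈ T, G.B.mulVec x u :=
    Finset.sum_congr rfl fun u _ => by rw [hx.2]
  rw [hsum, sum_B_over_T]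
  refine Finset.sum_nonpos fun f _ => ?_
  by_cases hf : f = (⟨e0, he0mem.1⟩ : G.Edge)
  · rw [hf, hxe, mul_zero]
  · by_cases h2 : ∃ hw : (f : G.V × G.V).2 ∈ G.hidden,
        (⟨(f : G.V × G.V).2, hw⟩ : G.Hidden) ∈ T
    · obtain ⟨hw2, h2T⟩ := h2
      by_cases hfv : (f : G.V × G.V).2 = v
      · exfalso
        have hmem : (f : G.V × G.V) ∈ G.edges.filter (fun e => e.2 = v) :=
          Finset.mem_filter.mpr ⟨f.prop, hfv⟩
        rw [he0] at hmem
        exact hf (Subtype.ext (Finset.mem_singleton.mp hmem))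
      · obtain ⟨hw1, h1T⟩ := hTstab ⟨(f : G.V × G.V).2, hw2⟩ h2T hfv (f : G.V × G.V).1
          (by rw [Prod.mk.eta]; exact f.prop)
        rw [if_pos ⟨hw2, h2T⟩, if_pos ⟨hw1, h1T⟩, sub_self, zero_mul]
    · rw [if_neg h2, zero_sub]
      by_cases h1 : ∃ hw : (f : G.V × G.V).1 ∈ G.hidden,
          (⟨(f : G.V × G.V).1, hw⟩ : G.Hidden) ∈ T
      · rw [if_pos h1]
        have := hx.1 f
        nlinarith
      · rw [if_neg h1, neg_zero, zero_mul]

end DagNet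


namespace DagNet

variable {G : DagNet}

open Classical in
lemma keyPos {c : G.Hidden → ℝ} {b' : G.V}
    (hC2v : ∀ T : Finset G.Hidden,
      (∀ u ∈ T, (u : G.V) ∈ G.pureDesc b') →
      (∀ u ∈ T, (u : G.V) ≠ b' → ∀ w : G.V, (w, (u : G.V)) ∈ G.edges →
        ∃ hw : w ∈ G.hidden, (⟨w, hw⟩ : G.Hidden) ∈ T) →
      ∑ u ∈ T, c u ≤ 0) :
    ∀ (n : ℕ) (z : G.Hidden → ℝ),
      (Finset.univ.filter (fun u => 0 < z u)).card ≤ n →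
      (∀ u, 0 < z u → (u : G.V) ∈ G.pureDesc b') →
      (∀ u, 0 < z u → (u : G.V) ≠ b' → ∀ w : G.V, (w, (u : G.V)) ∈ G.edges →
        ∃ hw : w ∈ G.hidden, z u ≤ z ⟨w, hw⟩) →
      ∑ u, max (z u) 0 * c u ≤ 0 := by
  intro n
  induction n with
  | zero =>
    intro z hcard _ _
    have hz : ∀ u, ¬ (0 < z u) := by
      intro u hu
      have : u ∈ Finset.univ.filter (fun u => 0 < z u) := by simp [hu]
      have := Finset.card_pos.mpr ⟨u, this⟩
      omega
    have : ∀ u ∈ (Finset.univ : Finset G.Hidden), max (z u) 0 * c u = 0 := by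
      intro u _
      rw [max_eq_right (le_of_not_gt (hz u)), zero_mul]
    rw [Finset.sum_congr rfl this, Finset.sum_const_zero]
  | succ n ih =>
    intro z hcard hz1 hz2
    set T := Finset.univ.filter (fun u => 0 < z u) with hT
    by_cases hTne : T.Nonempty
    swap
    · -- empty: all terms zero
      have hz : ∀ u, ¬ (0 < z u) := by
        intro u hu
        exact hTne ⟨u, by simp [hT, hu]⟩
      have : ∀ u ∈ (Finset.univ : Finset G.Hidden), max (z u) 0 * c u = 0 := by
        intro u _
        rw [max_eq_right (le_of_not_gt (hz u)), zero_mul]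
      rw [Finset.sum_congr rfl this, Finset.sum_const_zero]
    obtain ⟨u₀, hu₀T, hmin0⟩ := T.exists_min_image z hTne
    obtain ⟨t, htdef⟩ : ∃ t : ℝ, t = z u₀ := ⟨_, rfl⟩
    have ht0 : 0 < t := by rw [htdef]; exact (Finset.mem_filter.mp hu₀T).2
    have hmin : ∀ x' ∈ T, t ≤ z x' := by
      intro x hx; rw [htdef]; exact hmin0 x hx
    set z' : G.Hidden → ℝ := fun u => if 0 < z u then z u - t else z u with hz'
    have hz'le : ∀ u, 0 < z' u → (0 < z u ∧ u ≠ u₀ ∧ t ≤ z u) := by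
      intro u hu
      by_cases h : 0 < z u
      · refine ⟨h, ?_, hmin u (by simp [hT, h])⟩
        rintro rfl
        rw [hz'] at hu
        simp only [if_pos h] at hu
        rw [htdef] at hu
        linarith
      · rw [hz'] at hu
        simp only [if_neg h] at hu
        exact absurd hu h
    have hsubset : Finset.univ.filter (fun u => 0 < z' u) ⊆ T.erase u₀ := by
      intro u hu
      obtain ⟨h1, h2, _⟩ := hz'le u (Finset.mem_filter.mp hu).2
      exact Finset.mem_erase.mpr ⟨h2, by simp [hT, h1]⟩
    have hcard' : (Finset.univ.filter (fun u => 0 < z' u)).card ≤ n := by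
      have h1 := Finset.card_le_card hsubset
      have h2 := Finset.card_erase_of_mem hu₀T
      have h3 := Finset.card_pos.mpr hTne
      omega
    have hz1' : ∀ u, 0 < z' u → (u : G.V) ∈ G.pureDesc b' := fun u hu =>
      hz1 u (hz'le u hu).1
    have hz2' : ∀ u, 0 < z' u → (u : G.V) ≠ b' → ∀ w : G.V, (w, (u : G.V)) ∈ G.edges →
        ∃ hw : w ∈ G.hidden, z' u ≤ z' ⟨w, hw⟩ := by
      intro u hu hub w hw
      obtain ⟨h1, _, h3⟩ := hz'le u hu
      obtain ⟨hwh, hle⟩ := hz2 u h1 hub w hw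
      refine ⟨hwh, ?_⟩
      have hwpos : 0 < z ⟨w, hwh⟩ := lt_of_lt_of_le h1 hle
      rw [hz']
      simp only [if_pos h1, if_pos hwpos]
      linarith
    have hTsum : ∑ u ∈ T, c u ≤ 0 := by
      refine hC2v T (fun u hu => hz1 u (Finset.mem_filter.mp hu).2) ?_
      intro u hu hub w hw
      obtain ⟨hwh, hle⟩ := hz2 u (Finset.mem_filter.mp hu).2 hub w hw
      exact ⟨hwh, by simp [hT]; linarith [(Finset.mem_filter.mp hu).2]⟩
    have hdecomp : ∑ u, max (z u) 0 * c u
        = t * ∑ u ∈ T, c u + ∑ u, max (z' u) 0 * c u := by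
      rw [Finset.mul_sum, Finset.sum_filter, ← Finset.sum_add_distrib]
      refine Finset.sum_congr rfl fun u _ => ?_
      by_cases h : 0 < z u
      · have hge : t ≤ z u := hmin u (by simp [hT, h])
        rw [if_pos h, hz']
        simp only [if_pos h]
        rw [max_eq_left h.le, max_eq_left (by linarith)]
        ring
      · rw [if_neg h, hz']
        simp only [if_neg h]
        linarith
    rw [hdecomp]
    have hle1 : t * ∑ u ∈ T, c u ≤ 0 := mul_nonpos_of_nonneg_of_nonpos ht0.le hTsum
    have hle2 := ih z' hcard' hz1' hz2'
    linarith

open Classical in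
lemma keyNeg {c : G.Hidden → ℝ} {a' : G.V}
    (hC1v : ∀ T : Finset G.Hidden,
      (∀ u ∈ T, (u : G.V) ∈ G.pureAnc a') →
      (∀ u ∈ T, (u : G.V) ≠ a' → ∀ w : G.V, ((u : G.V), w) ∈ G.edges →
        ∃ hw : w ∈ G.hidden, (⟨w, hw⟩ : G.Hidden) ∈ T) →
      0 ≤ ∑ u ∈ T, c u) :
    ∀ (n : ℕ) (z : G.Hidden → ℝ),
      (Finset.univ.filter (fun u => 0 < z u)).card ≤ n →
      (∀ u, 0 < z u → (u : G.V) ∈ G.pureAnc a') →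
      (∀ u, 0 < z u → (u : G.V) ≠ a' → ∀ w : G.V, ((u : G.V), w) ∈ G.edges →
        ∃ hw : w ∈ G.hidden, z u ≤ z ⟨w, hw⟩) →
      0 ≤ ∑ u, max (z u) 0 * c u := by
  intro n
  induction n with
  | zero =>
    intro z hcard _ _
    have hz : ∀ u, ¬ (0 < z u) := by
      intro u hu
      have : u ∈ Finset.univ.filter (fun u => 0 < z u) := by simp [hu]
      have := Finset.card_pos.mpr ⟨u, this⟩
      omega
    have : ∀ u ∈ (Finset.univ : Finset G.Hidden), max (z u) 0 * c u = 0 := by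
      intro u _
      rw [max_eq_right (le_of_not_gt (hz u)), zero_mul]
    rw [Finset.sum_congr rfl this, Finset.sum_const_zero]
  | succ n ih =>
    intro z hcard hz1 hz2
    set T := Finset.univ.filter (fun u => 0 < z u) with hT
    by_cases hTne : T.Nonempty
    swap
    · have hz : ∀ u, ¬ (0 < z u) := by
        intro u hu
        exact hTne ⟨u, by simp [hT, hu]⟩
      have : ∀ u ∈ (Finset.univ : Finset G.Hidden), max (z u) 0 * c u = 0 := by
        intro u _
        rw [max_eq_right (le_of_not_gt (hz u)), zero_mul]
      rw [Finset.sum_congr rfl this, Finset.sum_const_zero]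
    obtain ⟨u₀, hu₀T, hmin0⟩ := T.exists_min_image z hTne
    obtain ⟨t, htdef⟩ : ∃ t : ℝ, t = z u₀ := ⟨_, rfl⟩
    have ht0 : 0 < t := by rw [htdef]; exact (Finset.mem_filter.mp hu₀T).2
    have hmin : ∀ x' ∈ T, t ≤ z x' := by
      intro x hx; rw [htdef]; exact hmin0 x hx
    set z' : G.Hidden → ℝ := fun u => if 0 < z u then z u - t else z u with hz'
    have hz'le : ∀ u, 0 < z' u → (0 < z u ∧ u ≠ u₀ ∧ t ≤ z u) := by
      intro u hu
      by_cases h : 0 < z u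
      · refine ⟨h, ?_, hmin u (by simp [hT, h])⟩
        rintro rfl
        rw [hz'] at hu
        simp only [if_pos h] at hu
        rw [htdef] at hu
        linarith
      · rw [hz'] at hu
        simp only [if_neg h] at hu
        exact absurd hu h
    have hsubset : Finset.univ.filter (fun u => 0 < z' u) ⊆ T.erase u₀ := by
      intro u hu
      obtain ⟨h1, h2, _⟩ := hz'le u (Finset.mem_filter.mp hu).2
      exact Finset.mem_erase.mpr ⟨h2, by simp [hT, h1]⟩
    have hcard' : (Finset.univ.filter (fun u => 0 < z' u)).card ≤ n := by
      have h1 := Finset.card_le_card hsubset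
      have h2 := Finset.card_erase_of_mem hu₀T
      have h3 := Finset.card_pos.mpr hTne
      omega
    have hz1' : ∀ u, 0 < z' u → (u : G.V) ∈ G.pureAnc a' := fun u hu =>
      hz1 u (hz'le u hu).1
    have hz2' : ∀ u, 0 < z' u → (u : G.V) ≠ a' → ∀ w : G.V, ((u : G.V), w) ∈ G.edges →
        ∃ hw : w ∈ G.hidden, z' u ≤ z' ⟨w, hw⟩ := by
      intro u hu hub w hw
      obtain ⟨h1, _, h3⟩ := hz'le u hu
      obtain ⟨hwh, hle⟩ := hz2 u h1 hub w hw
      refine ⟨hwh, ?_⟩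
      have hwpos : 0 < z ⟨w, hwh⟩ := lt_of_lt_of_le h1 hle
      rw [hz']
      simp only [if_pos h1, if_pos hwpos]
      linarith
    have hTsum : 0 ≤ ∑ u ∈ T, c u := by
      refine hC1v T (fun u hu => hz1 u (Finset.mem_filter.mp hu).2) ?_
      intro u hu hub w hw
      obtain ⟨hwh, hle⟩ := hz2 u (Finset.mem_filter.mp hu).2 hub w hw
      exact ⟨hwh, by simp [hT]; linarith [(Finset.mem_filter.mp hu).2]⟩
    have hdecomp : ∑ u, max (z u) 0 * c u
        = t * ∑ u ∈ T, c u + ∑ u, max (z' u) 0 * c u := by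
      rw [Finset.mul_sum, Finset.sum_filter, ← Finset.sum_add_distrib]
      refine Finset.sum_congr rfl fun u _ => ?_
      by_cases h : 0 < z u
      · have hge : t ≤ z u := hmin u (by simp [hT, h])
        rw [if_pos h, hz']
        simp only [if_pos h]
        rw [max_eq_left h.le, max_eq_left (by linarith)]
        ring
      · rw [if_neg h, hz']
        simp only [if_neg h]
        linarith
    rw [hdecomp]
    have hle1 : 0 ≤ t * ∑ u ∈ T, c u := mul_nonneg ht0.le hTsum
    have hle2 := ih z' hcard' hz1' hz2'
    linarith

end DagNet


namespace DagNet

variable {G : DagNet}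

lemma Walk.end_cases {x z : G.V} (w : G.Walk x z) :
    x = z ∨ ∃ w0, (w0, z) ∈ G.edges := by
  induction w with
  | nil => exact Or.inl rfl
  | cons h p ih =>
    rcases ih with rfl | hex
    · exact Or.inr ⟨_, h⟩
    · exact Or.inr hex

lemma Walk.eq_of_from_VO {x z : G.V} (w : G.Walk x z) (hx : x ∈ G.VO) : x = z := by
  cases w with
  | nil => rfl
  | cons h p => exact absurd hx (G.no_edge_from_output _ h)

lemma finpath_mono {yhat : G.V → ℝ} {e₀ : G.V × G.V}
    (hmono : ∀ f ∈ G.edges, f ≠ e₀ → yhat f.2 ≤ yhat f.1)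
    {k : ℕ} {u : Fin (k + 1) → G.V} (hu : G.IsPathFun u)
    (havoid : ∀ i : Fin k, (u i.castSucc, u i.succ) ≠ e₀) :
    yhat (u (Fin.last k)) ≤ yhat (u 0) := by
  have key : ∀ j : ℕ, ∀ hj : j ≤ k, yhat (u ⟨j, Nat.lt_succ_of_le hj⟩) ≤ yhat (u 0) := by
    intro j
    induction j with
    | zero =>
      intro hj
      have h0 : (⟨0, Nat.lt_succ_of_le hj⟩ : Fin (k + 1)) = 0 := by
        ext; simp
      rw [h0]
    | succ j ihj =>
      intro hj
      have hjk : j < k := hj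
      have hjle : j ≤ k := le_of_lt hjk
      have hedge := hu ⟨j, hjk⟩
      have hne := havoid ⟨j, hjk⟩
      have h1 : (⟨j, hjk⟩ : Fin k).castSucc = (⟨j, Nat.lt_succ_of_le hjle⟩ : Fin (k + 1)) := by
        ext; simp
      have h2 : (⟨j, hjk⟩ : Fin k).succ = (⟨j + 1, Nat.lt_succ_of_le hj⟩ : Fin (k + 1)) := by
        ext; simp
      rw [h1, h2] at hedge hne
      calc yhat (u ⟨j + 1, Nat.lt_succ_of_le hj⟩)
          ≤ yhat (u ⟨j, Nat.lt_succ_of_le hjle⟩) := hmono _ hedge hne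
        _ ≤ yhat (u 0) := ihj hjle
  have hlast : (Fin.last k) = ⟨k, Nat.lt_succ_of_le le_rfl⟩ := rfl
  rw [hlast]
  exact key k le_rfl

open Classical in
lemma feasible_of_conds
    (hpath : ∀ v ∈ G.hidden, ∃ i ∈ G.VI, ∃ o ∈ G.VO, G.Reaches i v ∧ G.Reaches v o)
    {c : G.Hidden → ℝ}
    (hC1 : ∀ v : G.V, G.OutBottleneck v → ∀ T : Finset G.Hidden,
        (∀ u ∈ T, (u : G.V) ∈ G.pureAnc v) →
        (∀ u ∈ T, (u : G.V) ≠ v → ∀ w : G.V, ((u : G.V), w) ∈ G.edges →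
          ∃ hw : w ∈ G.hidden, (⟨w, hw⟩ : G.Hidden) ∈ T) →
        0 ≤ ∑ u ∈ T, c u)
    (hC2 : ∀ v : G.V, G.InBottleneck v → ∀ T : Finset G.Hidden,
        (∀ u ∈ T, (u : G.V) ∈ G.pureDesc v) →
        (∀ u ∈ T, (u : G.V) ≠ v → ∀ w : G.V, (w, (u : G.V)) ∈ G.edges →
          ∃ hw : w ∈ G.hidden, (⟨w, hw⟩ : G.Hidden) ∈ T) →
        ∑ u ∈ T, c u ≤ 0)
    (e : G.Edge) : ∃ x ∈ G.Pset c, x e = 0 := by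
  rcases DagAux.farkas_cols (J := {f : G.Edge // f ≠ e})
      (fun v (j : {f : G.Edge // f ≠ e}) => G.B v (j : G.Edge)) c with
    ⟨x', hx'0, hx'⟩ | ⟨y, hy, hyb⟩
  · -- feasible: extend by zero
    refine ⟨fun f => if h : f = e then 0 else x' ⟨f, h⟩, ⟨?_, ?_⟩, by simp⟩
    · intro f
      by_cases h : f = e
      · simp [h]
      · simpa [h] using hx'0 ⟨f, h⟩
    · funext v
      rw [mulVec_apply']
      rw [← Finset.sum_erase_add _ _ (Finset.mem_univ e), dif_pos rfl, mul_zero, add_zero]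
      have hmemiff : ∀ f : G.Edge, f ∈ Finset.univ.erase e ↔ f ≠ e := by
        intro f; simp
      rw [Finset.sum_subtype _ hmemiff (fun f => G.B v f * if h : f = e then 0 else x' ⟨f, h⟩)]
      rw [← hx' v]
      refine Finset.sum_congr rfl fun j _ => ?_
      rw [dif_neg j.2]
  · -- infeasible: contradiction with the bottleneck conditions
    exfalso
    set yhat : G.V → ℝ := fun w => if h : w ∈ G.hidden then y ⟨w, h⟩ else 0 with hyhat
    have hyhid : ∀ v : G.Hidden, yhat (v : G.V) = y v := by
      intro v
      rw [hyhat]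
      simp only [dif_pos v.2]
    have hyVI : ∀ w ∈ G.VI, yhat w = 0 := fun w hw =>
      dif_neg (fun hh => hidden_not_VI hh hw)
    have hyVO : ∀ w ∈ G.VO, yhat w = 0 := fun w hw =>
      dif_neg (fun hh => hidden_not_VO hh hw)
    have hsum_y_ind : ∀ w : G.V,
        (∑ v : G.Hidden, y v * (if w = (v : G.V) then (1:ℝ) else 0)) = yhat w := by
      intro w
      by_cases hw : w ∈ G.hidden
      · have hrw : ∀ v : G.Hidden, (w = (v : G.V)) ↔ (v = (⟨w, hw⟩ : G.Hidden)) := by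
          intro v
          rw [Subtype.ext_iff]
          exact ⟨fun h => h.symm, fun h => h.symm⟩
        rw [Finset.sum_congr rfl (fun v _ => by rw [if_congr (hrw v) rfl rfl, mul_ite, mul_one, mul_zero])]
        rw [Finset.sum_ite_eq' Finset.univ (⟨w, hw⟩ : G.Hidden) (fun v => y v)]
        rw [hyhat]
        simp [hw]
      · rw [hyhat]
        simp only [dif_neg hw]
        refine Finset.sum_eq_zero fun v _ => ?_
        rw [if_neg, mul_zero]
        intro h
        exact hw (h ▸ v.2)
    have hsum_y_B : ∀ f : G.Edge,
        (∑ v : G.Hidden, y v * G.B v f) = yhat (f : G.V × G.V).2 - yhat (f : G.V × G.V).1 := by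
      intro f
      rw [Finset.sum_congr rfl (fun v _ => by rw [B_apply_edge f v, mul_sub]),
        Finset.sum_sub_distrib, hsum_y_ind, hsum_y_ind]
    have hmono : ∀ f ∈ G.edges, f ≠ (e : G.V × G.V) → yhat f.2 ≤ yhat f.1 := by
      intro f hf hfe
      have hne : (⟨f, hf⟩ : G.Edge) ≠ e := fun h => hfe (congrArg Subtype.val h)
      have h := hy ⟨⟨f, hf⟩, hne⟩
      rw [hsum_y_B ⟨f, hf⟩] at h
      linarith
    have heE : ((e : G.V × G.V).1, (e : G.V × G.V).2) ∈ G.edges := by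
      rw [Prod.mk.eta]; exact e.prop
    -- positive side
    have hApos : ∀ v : G.Hidden, 0 < y v → Nonempty (G.Walk (e : G.V × G.V).2 (v : G.V)) := by
      intro v hv
      obtain ⟨i, hi, o, ho, hiv, hvo⟩ := hpath (v : G.V) v.2
      obtain ⟨w1⟩ := Walk.ofReaches hiv
      by_cases huse : w1.uses (e : G.V × G.V)
      · exact (w1.uses_split huse).2
      · exfalso
        have h := Walk.mono hmono w1 huse
        rw [hyVI i hi, hyhid v] at h
        linarith
    have hPDesc : ∀ v : G.Hidden, 0 < y v → (v : G.V) ∈ G.pureDesc (e : G.V × G.V).2 := by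
      intro v hv
      refine ⟨v.2, ?_, ?_⟩
      · obtain ⟨w⟩ := hApos v hv; exact w.toReaches
      · intro k u hu hlast hfirst
        by_contra hnone
        push_neg at hnone
        have havoid : ∀ i : Fin k, (u i.castSucc, u i.succ) ≠ (e : G.V × G.V) := by
          intro i hEq
          exact hnone i.succ (congrArg Prod.snd hEq)
        have h := finpath_mono hmono hu havoid
        rw [hlast, hyVI _ hfirst, hyhid v] at h
        linarith
    have hInB : (∃ v : G.Hidden, 0 < y v) → G.InBottleneck (e : G.V × G.V).2 := by
      rintro ⟨v, hv⟩
      obtain ⟨wsuf⟩ := hApos v hv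
      have hsufavoid : ¬ wsuf.uses ((e : G.V × G.V).1, (e : G.V × G.V).2) :=
        Walk.not_uses_into_start heE wsuf
      rw [Prod.mk.eta] at hsufavoid
      have hebVO : (e : G.V × G.V).2 ∉ G.VO := by
        intro hVO
        have h := wsuf.eq_of_from_VO hVO
        exact hidden_not_VO (h ▸ v.2) hVO
      have hebVI : (e : G.V × G.V).2 ∉ G.VI := G.no_edge_into_input _ e.prop
      refine ⟨mem_hidden_of hebVI hebVO, ?_⟩
      have huniq : ∀ f ∈ G.edges, f.2 = (e : G.V × G.V).2 → f = (e : G.V × G.V) := by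
        intro f hf hf2
        by_contra hfe
        have hedge : (f.1, (e : G.V × G.V).2) ∈ G.edges := by
          rw [← hf2, Prod.mk.eta]; exact hf
        have hpairne : (f.1, (e : G.V × G.V).2) ≠ (e : G.V × G.V) := by
          intro hEq
          exact hfe (by rw [← Prod.mk.eta (p := f), hf2]; exact hEq)
        have hw0VO : f.1 ∉ G.VO := G.no_edge_from_output f hf
        by_cases hw0VI : f.1 ∈ G.VI
        · have havoid : ¬ (Walk.cons hedge wsuf).uses (e : G.V × G.V) := by
            rw [Walk.uses_cons_iff]
            rintro (hEq | huse)
            · exact hpairne hEq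
            · exact hsufavoid huse
          have h := Walk.mono hmono (Walk.cons hedge wsuf) havoid
          rw [hyVI _ hw0VI, hyhid v] at h
          linarith
        · have hw0hid : f.1 ∈ G.hidden := mem_hidden_of hw0VI hw0VO
          obtain ⟨i2, hi2, o2, ho2, hi2w, -⟩ := hpath f.1 hw0hid
          obtain ⟨M⟩ := Walk.ofReaches hi2w
          have hMavoid : ¬ M.uses (e : G.V × G.V) := by
            intro huse
            obtain ⟨-, ⟨suf2⟩⟩ := M.uses_split huse
            exact G.acyclic (e : G.V × G.V).2
              (Relation.TransGen.tail' suf2.toReaches hedge)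
          have havoid : ¬ (M.wappend (Walk.cons hedge wsuf)).uses (e : G.V × G.V) := by
            rw [Walk.uses_wappend, Walk.uses_cons_iff]
            rintro (huse | hEq | huse)
            · exact hMavoid huse
            · exact hpairne hEq
            · exact hsufavoid huse
          have h := Walk.mono hmono (M.wappend (Walk.cons hedge wsuf)) havoid
          rw [hyVI _ hi2, hyhid v] at h
          linarith
      have hfilter : G.edges.filter (fun f => f.2 = (e : G.V × G.V).2) = {(e : G.V × G.V)} := by
        ext f
        simp only [Finset.mem_filter, Finset.mem_singleton]
        constructor
        · rintro ⟨hf, hf2⟩; exact huniq f hf hf2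
        · rintro rfl; exact ⟨e.prop, rfl⟩
      rw [hfilter, Finset.card_singleton]
    -- negative side
    have hBneg : ∀ v : G.Hidden, y v < 0 → Nonempty (G.Walk (v : G.V) (e : G.V × G.V).1) := by
      intro v hv
      obtain ⟨i, hi, o, ho, hiv, hvo⟩ := hpath (v : G.V) v.2
      obtain ⟨w2⟩ := Walk.ofReaches hvo
      by_cases huse : w2.uses (e : G.V × G.V)
      · exact (w2.uses_split huse).1
      · exfalso
        have h := Walk.mono hmono w2 huse
        rw [hyVO o ho, hyhid v] at h
        linarith
    have hPAnc : ∀ v : G.Hidden, y v < 0 → (v : G.V) ∈ G.pureAnc (e : G.V × G.V).1 := by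
      intro v hv
      refine ⟨v.2, ?_, ?_⟩
      · obtain ⟨w⟩ := hBneg v hv; exact w.toReaches
      · intro k u hu hfirst hlast
        by_contra hnone
        push_neg at hnone
        have havoid : ∀ i : Fin k, (u i.castSucc, u i.succ) ≠ (e : G.V × G.V) := by
          intro i hEq
          exact hnone i.castSucc (congrArg Prod.fst hEq)
        have h := finpath_mono hmono hu havoid
        rw [hfirst, hyVO _ hlast, hyhid v] at h
        linarith
    have hOutB : (∃ v : G.Hidden, y v < 0) → G.OutBottleneck (e : G.V × G.V).1 := by
      rintro ⟨v, hv⟩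
      obtain ⟨wpre⟩ := hBneg v hv
      have hpreavoid : ¬ wpre.uses ((e : G.V × G.V).1, (e : G.V × G.V).2) :=
        Walk.not_uses_from_end heE wpre
      rw [Prod.mk.eta] at hpreavoid
      have heaVO : (e : G.V × G.V).1 ∉ G.VO := G.no_edge_from_output _ e.prop
      have heaVI : (e : G.V × G.V).1 ∉ G.VI := by
        intro hVI
        rcases wpre.end_cases with hEq | ⟨w0, hw0⟩
        · exact hidden_not_VI (hEq ▸ v.2) hVI
        · exact G.no_edge_into_input _ hw0 hVI
      refine ⟨mem_hidden_of heaVI heaVO, ?_⟩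
      have huniq : ∀ f ∈ G.edges, f.1 = (e : G.V × G.V).1 → f = (e : G.V × G.V) := by
        intro f hf hf1
        by_contra hfe
        have hedge : ((e : G.V × G.V).1, f.2) ∈ G.edges := by
          rw [← hf1, Prod.mk.eta]; exact hf
        have hpairne : ((e : G.V × G.V).1, f.2) ≠ (e : G.V × G.V) := by
          intro hEq
          exact hfe (by rw [← Prod.mk.eta (p := f), hf1]; exact hEq)
        have hw2VI : f.2 ∉ G.VI := G.no_edge_into_input f hf
        by_cases hw2VO : f.2 ∈ G.VO
        · have havoid : ¬ (wpre.wappend (Walk.cons hedge (Walk.nil f.2))).uses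
              (e : G.V × G.V) := by
            rw [Walk.uses_wappend, Walk.uses_cons_iff]
            rintro (huse | hEq | huse)
            · exact hpreavoid huse
            · exact hpairne hEq
            · exact huse
          have h := Walk.mono hmono (wpre.wappend (Walk.cons hedge (Walk.nil f.2))) havoid
          rw [hyVO _ hw2VO, hyhid v] at h
          linarith
        · have hw2hid : f.2 ∈ G.hidden := mem_hidden_of hw2VI hw2VO
          obtain ⟨i2, hi2, o2, ho2, -, hw2o⟩ := hpath f.2 hw2hid
          obtain ⟨N⟩ := Walk.ofReaches hw2o
          have hNavoid : ¬ N.uses (e : G.V × G.V) := by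
            intro huse
            obtain ⟨⟨pre2⟩, -⟩ := N.uses_split huse
            exact G.acyclic (e : G.V × G.V).1
              (Relation.TransGen.head' hedge pre2.toReaches)
          have havoid : ¬ (wpre.wappend (Walk.cons hedge N)).uses (e : G.V × G.V) := by
            rw [Walk.uses_wappend, Walk.uses_cons_iff]
            rintro (huse | hEq | huse)
            · exact hpreavoid huse
            · exact hpairne hEq
            · exact hNavoid huse
          have h := Walk.mono hmono (wpre.wappend (Walk.cons hedge N)) havoid
          rw [hyVO _ ho2, hyhid v] at h
          linarith
      have hfilter : G.edges.filter (fun f => f.1 = (e : G.V × G.V).1) = {(e : G.V × G.V)} := by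
        ext f
        simp only [Finset.mem_filter, Finset.mem_singleton]
        constructor
        · rintro ⟨hf, hf1⟩; exact huniq f hf hf1
        · rintro rfl; exact ⟨e.prop, rfl⟩
      rw [hfilter, Finset.card_singleton]
    -- combine
    have hposle : ∑ v, max (y v) 0 * c v ≤ 0 := by
      by_cases hA : ∃ v : G.Hidden, 0 < y v
      · refine keyPos (hC2 _ (hInB hA)) (Finset.univ.filter (fun u => 0 < y u)).card y
          le_rfl hPDesc ?_
        intro u hu hub w hw
        have hpairne : (w, (u : G.V)) ≠ (e : G.V × G.V) := by
          intro hEq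
          exact hub (congrArg Prod.snd hEq)
        have h := hmono (w, (u : G.V)) hw hpairne
        rw [hyhid u] at h
        have hwpos : 0 < yhat w := lt_of_lt_of_le hu h
        have hwh : w ∈ G.hidden := by
          by_contra hcon
          rw [hyhat] at hwpos
          simp only [dif_neg hcon] at hwpos
          linarith
        refine ⟨hwh, ?_⟩
        have : yhat w = y ⟨w, hwh⟩ := by rw [hyhat]; simp [hwh]
        linarith [this ▸ h]
      · push_neg at hA
        have : ∀ v ∈ (Finset.univ : Finset G.Hidden), max (y v) 0 * c v = 0 := by
          intro v _
          rw [max_eq_right (hA v), zero_mul]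
        rw [Finset.sum_congr rfl this, Finset.sum_const_zero]
    have hnegge : 0 ≤ ∑ v, max (-(y v)) 0 * c v := by
      by_cases hB : ∃ v : G.Hidden, y v < 0
      · refine keyNeg (hC1 _ (hOutB hB)) (Finset.univ.filter (fun u => 0 < -(y u))).card
          (fun u => -(y u)) le_rfl (fun u hu => hPAnc u (by linarith [neg_pos.mp hu])) ?_
        intro u hu hub w hw
        have hpairne : ((u : G.V), w) ≠ (e : G.V × G.V) := by
          intro hEq
          exact hub (congrArg Prod.fst hEq)
        have h := hmono ((u : G.V), w) hw hpairne
        rw [hyhid u] at h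
        have huneg : y u < 0 := by linarith [neg_pos.mp hu]
        have hwneg : yhat w < 0 := lt_of_le_of_lt h huneg
        have hwh : w ∈ G.hidden := by
          by_contra hcon
          rw [hyhat] at hwneg
          simp only [dif_neg hcon] at hwneg
          linarith
        refine ⟨hwh, ?_⟩
        have : yhat w = y ⟨w, hwh⟩ := by rw [hyhat]; simp [hwh]
        rw [this] at h
        show -(y u) ≤ -(y ⟨w, hwh⟩)
        linarith
      · push_neg at hB
        have : ∀ v ∈ (Finset.univ : Finset G.Hidden), max (-(y v)) 0 * c v = 0 := by
          intro v _
          rw [max_eq_right (by linarith [hB v]), zero_mul]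
        rw [Finset.sum_congr rfl this, Finset.sum_const_zero]
    have hdecomp : ∑ v, y v * c v
        = ∑ v, max (y v) 0 * c v - ∑ v, max (-(y v)) 0 * c v := by
      rw [← Finset.sum_sub_distrib]
      refine Finset.sum_congr rfl fun v _ => ?_
      rcases le_or_gt (y v) 0 with h | h
      · rw [max_eq_right h, max_eq_left (by linarith)]
        ring
      · rw [max_eq_left h.le, max_eq_right (by linarith)]
        ring
    rw [hdecomp] at hyb
    linarith

end DagNet

/-- complete characterization of connectedness of the invariant
set: `H_G(c)` is connected iff every forward-stable set of pure ancestors of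
an out-bottleneck has nonnegative total balance and every backward-stable set
of pure descendants of an in-bottleneck has nonpositive total balance. -/
theorem statement5 (G : DagNet)
    (hpath : ∀ v ∈ G.hidden, ∃ i ∈ G.VI, ∃ o ∈ G.VO,
      G.Reaches i v ∧ G.Reaches v o)
    (c : G.Hidden → ℝ) :
    IsConnected (G.invariantSet c) ↔
      ((∀ v : G.V, G.OutBottleneck v → ∀ T : Finset G.Hidden,
          (∀ u ∈ T, (u : G.V) ∈ G.pureAnc v) →
          (∀ u ∈ T, (u : G.V) ≠ v → ∀ w : G.V, ((u : G.V), w) ∈ G.edges →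
            ∃ hw : w ∈ G.hidden, (⟨w, hw⟩ : G.Hidden) ∈ T) →
          0 ≤ ∑ u ∈ T, c u) ∧
       (∀ v : G.V, G.InBottleneck v → ∀ T : Finset G.Hidden,
          (∀ u ∈ T, (u : G.V) ∈ G.pureDesc v) →
          (∀ u ∈ T, (u : G.V) ≠ v → ∀ w : G.V, (w, (u : G.V)) ∈ G.edges →
            ∃ hw : w ∈ G.hidden, (⟨w, hw⟩ : G.Hidden) ∈ T) →
          ∑ u ∈ T, c u ≤ 0)) := by
  constructor
  · intro hconn
    have hfeas : ∀ e : G.Edge, ∃ x ∈ G.Pset c, x e = 0 := fun e =>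
      DagNet.feasible_of_connected hconn e
    exact ⟨DagNet.cond1_of_feasible hfeas, DagNet.cond2_of_feasible hfeas⟩
  · rintro ⟨hC1, hC2⟩
    exact DagNet.connected_of_feasible (DagNet.Pset_nonempty hpath c)
      (DagNet.feasible_of_conds hpath hC1 hC2)
end
end

section
/- Assume every hidden node of G lies on a directed path from an input node to an output node. Then for every c ∈ ℝ^{Ṽ}, the invariant set H_G(c) is a connected subset of ℝ^E if and only if: for every out-bottleneck v with unique outgoing edge e*, there exists x ∈ ℝ^E with x ≥ 0 entrywise, x_{e*} = 0, and B̃x = c; and for every in-bottleneck w with unique incoming edge e', there exists x ∈ ℝ^E with x ≥ 0 entrywise, x_{e'} = 0, and B̃x = c. -/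
noncomputable section

open Matrix Finset

namespace DagNet

variable (G : DagNet)

lemma no_self_loop {a : G.V} (h : (a, a) ∈ G.edges) : False :=
  G.acyclic a (Relation.TransGen.single h)

/-- Indicator of a vertex, restricted to hidden rows. -/
def delta (a : G.V) : G.Hidden → ℝ := fun v => if (v : G.V) = a then 1 else 0

lemma delta_of_not_hidden {a : G.V} (h : a ∉ G.hidden) : G.delta a = 0 := by
  funext v
  have hv : (v : G.V) ≠ a := fun hva => h (hva ▸ v.2)
  simp [delta, hv]

lemma not_hidden_of_VI {a : G.V} (h : a ∈ G.VI) : a ∉ G.hidden := by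
  intro ha
  rw [hidden, Finset.mem_sdiff] at ha
  exact ha.2 (Finset.mem_union_left _ h)

lemma not_hidden_of_VO {a : G.V} (h : a ∈ G.VO) : a ∉ G.hidden := by
  intro ha
  rw [hidden, Finset.mem_sdiff] at ha
  exact ha.2 (Finset.mem_union_right _ h)

lemma hidden_of_not_IO {a : G.V} (h1 : a ∉ G.VI) (h2 : a ∉ G.VO) : a ∈ G.hidden := by
  rw [hidden, Finset.mem_sdiff]
  refine ⟨Finset.mem_univ _, ?_⟩
  rw [Finset.mem_union]
  rintro (h | h) <;> [exact h1 h; exact h2 h]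

lemma B_apply (v : G.Hidden) (e : G.Edge) :
    G.B v e = G.delta (e : G.V × G.V).2 v - G.delta (e : G.V × G.V).1 v := by
  obtain ⟨⟨a, b⟩, he⟩ := e
  show (if b = (v : G.V) then (1:ℝ) else if a = (v : G.V) then -1 else 0)
      = (if (v : G.V) = b then (1:ℝ) else 0) - (if (v : G.V) = a then 1 else 0)
  by_cases h2 : b = (v : G.V)
  · have h1 : ¬ (v : G.V) = a := by
      intro h
      rw [h2, h] at he
      exact G.no_self_loop he
    rw [if_pos h2, if_pos h2.symm, if_neg h1, sub_zero]
  · have h2' : ¬ (v : G.V) = b := fun h => h2 h.symm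
    by_cases h1 : a = (v : G.V)
    · rw [if_neg h2, if_pos h1, if_neg h2', if_pos h1.symm, zero_sub]
    · have h1' : ¬ (v : G.V) = a := fun h => h1 h.symm
      rw [if_neg h2, if_neg h1, if_neg h2', if_neg h1', sub_zero]

lemma mulVec_single_edge (e₀ : G.Edge) (t : ℝ) :
    G.B.mulVec (Pi.single e₀ t) =
      fun v => t * (G.delta (e₀ : G.V × G.V).2 v - G.delta (e₀ : G.V × G.V).1 v) := by
  rw [Matrix.mulVec_single]
  funext v
  show G.B v e₀ * t = _
  rw [G.B_apply v e₀]
  ring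

lemma flow_exists {a b : G.V} (h : G.Reaches a b) :
    ∃ x : G.Edge → ℝ, (∀ e, 0 ≤ x e) ∧
      G.B.mulVec x = fun v => G.delta b v - G.delta a v := by
  induction h with
  | refl =>
    refine ⟨0, fun e => le_refl 0, ?_⟩
    rw [Matrix.mulVec_zero]
    funext v; simp
  | @tail p q hap hpq ih =>
    obtain ⟨x, hx0, hxv⟩ := ih
    refine ⟨x + Pi.single (⟨(p, q), hpq⟩ : G.Edge) 1, fun e => add_nonneg (hx0 e) ?_, ?_⟩
    · rcases eq_or_ne e (⟨(p, q), hpq⟩ : G.Edge) with rfl | hne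
      · simp
      · rw [Pi.single_eq_of_ne hne]
    · rw [Matrix.mulVec_add, hxv, G.mulVec_single_edge]
      funext v
      simp only [Pi.add_apply]
      ring

lemma flow_exists_avoid_tail {a b : G.V} (h : G.Reaches a b) (e₀ : G.Edge)
    (hav : ¬ G.Reaches a (e₀ : G.V × G.V).1) :
    ∃ x : G.Edge → ℝ, (∀ e, 0 ≤ x e) ∧ x e₀ = 0 ∧
      G.B.mulVec x = fun v => G.delta b v - G.delta a v := by
  induction h with
  | refl =>
    refine ⟨0, fun e => le_refl 0, rfl, ?_⟩
    rw [Matrix.mulVec_zero]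
    funext v; simp
  | @tail p q hap hpq ih =>
    obtain ⟨x, hx0, hxe, hxv⟩ := ih
    have hne : (⟨(p, q), hpq⟩ : G.Edge) ≠ e₀ := by
      intro hEq
      apply hav
      have : (e₀ : G.V × G.V).1 = p := by rw [← hEq]
      rw [this]; exact hap
    refine ⟨x + Pi.single (⟨(p, q), hpq⟩ : G.Edge) 1, fun e => add_nonneg (hx0 e) ?_, ?_, ?_⟩
    · rcases eq_or_ne e (⟨(p, q), hpq⟩ : G.Edge) with rfl | hne'
      · simp
      · rw [Pi.single_eq_of_ne hne']
    · rw [Pi.add_apply, hxe, Pi.single_eq_of_ne (Ne.symm hne), add_zero]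
    · rw [Matrix.mulVec_add, hxv, G.mulVec_single_edge]
      funext v
      simp only [Pi.add_apply]
      ring

lemma flow_exists_avoid_head {a b : G.V} (h : G.Reaches a b) (e₀ : G.Edge)
    (hav : ¬ G.Reaches (e₀ : G.V × G.V).2 b) :
    ∃ x : G.Edge → ℝ, (∀ e, 0 ≤ x e) ∧ x e₀ = 0 ∧
      G.B.mulVec x = fun v => G.delta b v - G.delta a v := by
  induction h using Relation.ReflTransGen.head_induction_on with
  | refl =>
    refine ⟨0, fun e => le_refl 0, rfl, ?_⟩
    rw [Matrix.mulVec_zero]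
    funext v; simp
  | @head p q hpq hqb ih =>
    obtain ⟨x, hx0, hxe, hxv⟩ := ih
    have hne : (⟨(p, q), hpq⟩ : G.Edge) ≠ e₀ := by
      intro hEq
      apply hav
      have : (e₀ : G.V × G.V).2 = q := by rw [← hEq]
      rw [this]; exact hqb
    refine ⟨x + Pi.single (⟨(p, q), hpq⟩ : G.Edge) 1, fun e => add_nonneg (hx0 e) ?_, ?_, ?_⟩
    · rcases eq_or_ne e (⟨(p, q), hpq⟩ : G.Edge) with rfl | hne'
      · simp
      · rw [Pi.single_eq_of_ne hne']
    · rw [Pi.add_apply, hxe, Pi.single_eq_of_ne (Ne.symm hne), add_zero]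
    · rw [Matrix.mulVec_add, hxv, G.mulVec_single_edge]
      funext v
      simp only [Pi.add_apply]
      ring

end DagNet
namespace DagNet

variable (G : DagNet)

lemma exists_sol (c : G.Hidden → ℝ)
    (hpath : ∀ v ∈ G.hidden, ∃ i ∈ G.VI, ∃ o ∈ G.VO, G.Reaches i v ∧ G.Reaches v o) :
    ∃ x : G.Edge → ℝ, (∀ e, 0 ≤ x e) ∧ G.B.mulVec x = c := by
  have key : ∀ v : G.Hidden, ∃ z : G.Edge → ℝ, (∀ e, 0 ≤ z e) ∧
      G.B.mulVec z = c v • G.delta (v : G.V) := by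
    intro v
    obtain ⟨i, hi, o, ho, hiv, hvo⟩ := hpath (v : G.V) v.2
    rcases le_or_gt 0 (c v) with hc | hc
    · obtain ⟨x, hx0, hxv⟩ := G.flow_exists hiv
      refine ⟨c v • x, fun e => mul_nonneg hc (hx0 e), ?_⟩
      rw [Matrix.mulVec_smul, hxv, G.delta_of_not_hidden (G.not_hidden_of_VI hi)]
      funext w
      simp
    · obtain ⟨x, hx0, hxv⟩ := G.flow_exists hvo
      refine ⟨(-(c v)) • x, fun e => mul_nonneg (by linarith) (hx0 e), ?_⟩
      rw [Matrix.mulVec_smul, hxv, G.delta_of_not_hidden (G.not_hidden_of_VO ho)]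
      funext w
      simp
  choose z hz0 hzv using key
  refine ⟨∑ v : G.Hidden, z v, fun e => ?_, ?_⟩
  · rw [Finset.sum_apply]
    exact Finset.sum_nonneg fun v _ => hz0 v e
  · have : G.B.mulVec (∑ v : G.Hidden, z v) = ∑ v : G.Hidden, G.B.mulVec (z v) := by
      simp only [← Matrix.mulVecLin_apply]
      exact map_sum G.B.mulVecLin z Finset.univ
    rw [this]
    funext w
    rw [Finset.sum_apply]
    simp only [hzv]
    have : ∀ v : G.Hidden, (c v • G.delta (v : G.V)) w = if w = v then c v else 0 := by
      intro v
      by_cases h : w = v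
      · simp [delta, h]
      · have : (w : G.V) ≠ (v : G.V) := fun hh => h (Subtype.ext hh)
        simp [delta, this, h]
    simp only [this]
    simp

lemma nullable (c : G.Hidden → ℝ)
    (hpath : ∀ v ∈ G.hidden, ∃ i ∈ G.VI, ∃ o ∈ G.VO, G.Reaches i v ∧ G.Reaches v o)
    (hOut : ∀ v : G.V, G.OutBottleneck v → ∀ estar : G.Edge,
        (estar : G.V × G.V).1 = v →
        ∃ x : G.Edge → ℝ, (∀ e, 0 ≤ x e) ∧ x estar = 0 ∧ G.B.mulVec x = c)
    (hIn : ∀ w : G.V, G.InBottleneck w → ∀ eprime : G.Edge,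
        (eprime : G.V × G.V).2 = w →
        ∃ x : G.Edge → ℝ, (∀ e, 0 ≤ x e) ∧ x eprime = 0 ∧ G.B.mulVec x = c)
    (e₀ : G.Edge) :
    ∃ x : G.Edge → ℝ, (∀ e, 0 ≤ x e) ∧ x e₀ = 0 ∧ G.B.mulVec x = c := by
  set u := (e₀ : G.V × G.V).1 with hu
  set w := (e₀ : G.V × G.V).2 with hw
  have he₀ : ((u, w) : G.V × G.V) ∈ G.edges := by
    rw [hu, hw]
    exact e₀.2
  by_cases houtb : u ∈ G.hidden ∧ (G.edges.filter (fun e => e.1 = u)).card = 1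
  · exact hOut u ⟨houtb.1, houtb.2⟩ e₀ rfl
  by_cases hinb : w ∈ G.hidden ∧ (G.edges.filter (fun e => e.2 = w)).card = 1
  · exact hIn w ⟨hinb.1, hinb.2⟩ e₀ rfl
  -- compensator at u
  have hA : ∃ A : G.Edge → ℝ, (∀ e, 0 ≤ A e) ∧ A e₀ = 0 ∧
      G.B.mulVec A = fun v => -(G.delta u v) := by
    by_cases hhid : u ∈ G.hidden
    · -- u hidden, not an out-bottleneck: there is another outgoing edge
      have hcard : (G.edges.filter (fun e => e.1 = u)).card ≠ 1 := fun h => houtb ⟨hhid, h⟩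
      have hmem : (e₀ : G.V × G.V) ∈ G.edges.filter (fun e => e.1 = u) :=
        Finset.mem_filter.2 ⟨e₀.2, rfl⟩
      have hex : ∃ p ∈ G.edges.filter (fun e => e.1 = u), p ≠ (e₀ : G.V × G.V) := by
        by_contra hcon
        push_neg at hcon
        exact hcard (by
          rw [Finset.eq_singleton_iff_unique_mem.2 ⟨hmem, hcon⟩]
          exact Finset.card_singleton _)
      obtain ⟨p, hpmem, hpne⟩ := hex
      obtain ⟨hpe, hp1⟩ := Finset.mem_filter.1 hpmem
      set f : G.Edge := ⟨p, hpe⟩ with hf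
      have hfp1 : (f : G.V × G.V).1 = u := hp1
      have hfne : f ≠ e₀ := fun h => hpne (congrArg Subtype.val h)
      by_cases hw'O : p.2 ∈ G.VO
      · refine ⟨Pi.single f 1, fun e => ?_, ?_, ?_⟩
        · rcases eq_or_ne e f with rfl | hne
          · simp
          · rw [Pi.single_eq_of_ne hne]
        · rw [Pi.single_eq_of_ne (Ne.symm hfne)]
        · rw [G.mulVec_single_edge, hfp1, G.delta_of_not_hidden (G.not_hidden_of_VO hw'O)]
          funext v
          simp
      · have hw'hid : p.2 ∈ G.hidden :=
          G.hidden_of_not_IO (G.no_edge_into_input p hpe) hw'O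
        obtain ⟨i, hi, o, ho, _, hw'o⟩ := hpath p.2 hw'hid
        have hnr : ¬ G.Reaches p.2 (e₀ : G.V × G.V).1 := by
          intro hr
          apply G.acyclic u
          have hedge : (u, p.2) ∈ G.edges := by
            have hpp : p = (u, p.2) := by rw [← hp1]
            rw [← hpp]; exact hpe
          exact Relation.TransGen.head' hedge hr
        obtain ⟨x, hx0, hxe, hxv⟩ := G.flow_exists_avoid_tail hw'o e₀ hnr
        refine ⟨Pi.single f 1 + x, fun e => add_nonneg ?_ (hx0 e), ?_, ?_⟩
        · rcases eq_or_ne e f with rfl | hne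
          · simp
          · rw [Pi.single_eq_of_ne hne]
        · rw [Pi.add_apply, hxe, Pi.single_eq_of_ne (Ne.symm hfne), add_zero]
        · rw [Matrix.mulVec_add, G.mulVec_single_edge, hxv, hfp1,
            G.delta_of_not_hidden (G.not_hidden_of_VO ho)]
          funext v
          simp only [Pi.add_apply, Pi.zero_apply]
          ring
    · refine ⟨0, fun e => le_refl 0, rfl, ?_⟩
      rw [Matrix.mulVec_zero, G.delta_of_not_hidden hhid]
      funext v
      simp
  -- compensator at w
  have hB : ∃ Bx : G.Edge → ℝ, (∀ e, 0 ≤ Bx e) ∧ Bx e₀ = 0 ∧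
      G.B.mulVec Bx = G.delta w := by
    by_cases hhid : w ∈ G.hidden
    · have hcard : (G.edges.filter (fun e => e.2 = w)).card ≠ 1 := fun h => hinb ⟨hhid, h⟩
      have hmem : (e₀ : G.V × G.V) ∈ G.edges.filter (fun e => e.2 = w) :=
        Finset.mem_filter.2 ⟨e₀.2, rfl⟩
      have hex : ∃ q ∈ G.edges.filter (fun e => e.2 = w), q ≠ (e₀ : G.V × G.V) := by
        by_contra hcon
        push_neg at hcon
        exact hcard (by
          rw [Finset.eq_singleton_iff_unique_mem.2 ⟨hmem, hcon⟩]
          exact Finset.card_singleton _)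
      obtain ⟨q, hqmem, hqne⟩ := hex
      obtain ⟨hqe, hq2⟩ := Finset.mem_filter.1 hqmem
      set g : G.Edge := ⟨q, hqe⟩ with hg
      have hgq2 : (g : G.V × G.V).2 = w := hq2
      have hgne : g ≠ e₀ := fun h => hqne (congrArg Subtype.val h)
      by_cases hu''I : q.1 ∈ G.VI
      · refine ⟨Pi.single g 1, fun e => ?_, ?_, ?_⟩
        · rcases eq_or_ne e g with rfl | hne
          · simp
          · rw [Pi.single_eq_of_ne hne]
        · rw [Pi.single_eq_of_ne (Ne.symm hgne)]
        · rw [G.mulVec_single_edge, hgq2, G.delta_of_not_hidden (G.not_hidden_of_VI hu''I)]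
          funext v
          simp
      · have hu''hid : q.1 ∈ G.hidden :=
          G.hidden_of_not_IO hu''I (G.no_edge_from_output q hqe)
        obtain ⟨i, hi, o, ho, hiu'', _⟩ := hpath q.1 hu''hid
        have hnr : ¬ G.Reaches (e₀ : G.V × G.V).2 q.1 := by
          intro hr
          apply G.acyclic w
          have hedge : (q.1, w) ∈ G.edges := by
            have hqq : q = (q.1, w) := by rw [← hq2]
            rw [← hqq]; exact hqe
          exact Relation.TransGen.tail' hr hedge
        obtain ⟨x, hx0, hxe, hxv⟩ := G.flow_exists_avoid_head hiu'' e₀ hnr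
        refine ⟨x + Pi.single g 1, fun e => add_nonneg (hx0 e) ?_, ?_, ?_⟩
        · rcases eq_or_ne e g with rfl | hne
          · simp
          · rw [Pi.single_eq_of_ne hne]
        · rw [Pi.add_apply, hxe, Pi.single_eq_of_ne (Ne.symm hgne), add_zero]
        · rw [Matrix.mulVec_add, G.mulVec_single_edge, hxv, hgq2,
            G.delta_of_not_hidden (G.not_hidden_of_VI hi)]
          funext v
          simp only [Pi.add_apply, Pi.zero_apply]
          ring
    · refine ⟨0, fun e => le_refl 0, rfl, ?_⟩
      rw [Matrix.mulVec_zero, G.delta_of_not_hidden hhid]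
  obtain ⟨A, hA0, hAe, hAv⟩ := hA
  obtain ⟨Bx, hB0, hBe, hBv⟩ := hB
  obtain ⟨x₀, hx₀0, hx₀c⟩ := G.exists_sol c hpath
  set t := x₀ e₀ with ht
  have ht0 : 0 ≤ t := hx₀0 e₀
  set sE : G.Edge → ℝ := Pi.single e₀ (1:ℝ) with hsE
  have hsE0 : ∀ e, 0 ≤ sE e := by
    intro e
    rcases eq_or_ne e e₀ with rfl | hne
    · rw [hsE, Pi.single_eq_same]; norm_num
    · rw [hsE, Pi.single_eq_of_ne hne]
  have hsEe₀ : sE e₀ = 1 := by rw [hsE, Pi.single_eq_same]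
  refine ⟨fun e => x₀ e + t * (A e + Bx e) - t * sE e, fun e => ?_, ?_, ?_⟩
  · show 0 ≤ x₀ e + t * (A e + Bx e) - t * sE e
    rcases eq_or_ne e e₀ with rfl | hne
    · rw [hAe, hBe, hsEe₀]
      simp [ht]
    · rw [hsE, Pi.single_eq_of_ne hne, mul_zero, sub_zero]
      have h1 := mul_nonneg ht0 (add_nonneg (hA0 e) (hB0 e))
      have h2 := hx₀0 e
      linarith
  · show x₀ e₀ + t * (A e₀ + Bx e₀) - t * sE e₀ = 0
    rw [hAe, hBe, hsEe₀]
    simp [ht]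
  · have hxeq : (fun e => x₀ e + t * (A e + Bx e) - t * sE e) =
        x₀ + t • (A + Bx) - t • sE := by
      funext e
      simp [mul_add]
    rw [hxeq, Matrix.mulVec_sub, Matrix.mulVec_add, Matrix.mulVec_smul, Matrix.mulVec_smul,
      Matrix.mulVec_add, hAv, hBv, hx₀c, hsE, G.mulVec_single_edge]
    funext v
    simp only [Pi.sub_apply, Pi.add_apply, Pi.smul_apply, smul_eq_mul]
    rw [← hu, ← hw]
    ring
end DagNet
namespace DagNet

variable (G : DagNet)

lemma sqrt_mem_invariantSet (c : G.Hidden → ℝ) {x : G.Edge → ℝ}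
    (hx : ∀ e, 0 ≤ x e) (hxc : G.B.mulVec x = c) (ε : G.Edge → ℝ)
    (hε : ∀ e, ε e = 1 ∨ ε e = -1) :
    (WithLp.toLp 2 (fun e => ε e * Real.sqrt (x e)) : EuclideanSpace ℝ G.Edge) ∈ G.invariantSet c := by
  show G.B.mulVec (fun e => (ε e * Real.sqrt (x e)) ^ 2) = c
  have : (fun e => (ε e * Real.sqrt (x e)) ^ 2) = x := by
    funext e
    have hsq : (ε e) ^ 2 = 1 := by rcases hε e with h | h <;> rw [h] <;> norm_num
    rw [mul_pow, hsq, one_mul, Real.sq_sqrt (hx e)]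
  rw [this, hxc]

lemma joined_sqrt (c : G.Hidden → ℝ) {x y : G.Edge → ℝ}
    (hx : ∀ e, 0 ≤ x e) (hy : ∀ e, 0 ≤ y e)
    (hxc : G.B.mulVec x = c) (hyc : G.B.mulVec y = c) (ε : G.Edge → ℝ)
    (hε : ∀ e, ε e = 1 ∨ ε e = -1) :
    JoinedIn (G.invariantSet c)
      (WithLp.toLp 2 (fun e => ε e * Real.sqrt (x e)) : EuclideanSpace ℝ G.Edge)
      (WithLp.toLp 2 (fun e => ε e * Real.sqrt (y e)) : EuclideanSpace ℝ G.Edge) := by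
  have hF : Continuous (fun t : ℝ =>
      (WithLp.toLp 2 (fun e => ε e * Real.sqrt ((1 - t) * x e + t * y e)) : EuclideanSpace ℝ G.Edge)) := by
    apply (PiLp.continuous_toLp 2 (fun _ : G.Edge => ℝ)).comp
    apply continuous_pi
    intro e
    exact (continuous_const.mul (((continuous_const.sub continuous_id).mul continuous_const).add
      (continuous_id.mul continuous_const)).sqrt)
  refine ⟨⟨⟨fun s => (WithLp.toLp 2 (fun e => ε e * Real.sqrt ((1 - (s : ℝ)) * x e + (s : ℝ) * y e)) :
      EuclideanSpace ℝ G.Edge), hF.comp continuous_subtype_val⟩, ?_, ?_⟩, ?_⟩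
  · show (WithLp.toLp 2 (fun e => ε e * Real.sqrt ((1 - (0:ℝ)) * x e + (0:ℝ) * y e)) : EuclideanSpace ℝ G.Edge)
      = WithLp.toLp 2 (fun e => ε e * Real.sqrt (x e))
    congr 1
    funext e
    norm_num
  · show (WithLp.toLp 2 (fun e => ε e * Real.sqrt ((1 - (1:ℝ)) * x e + (1:ℝ) * y e)) : EuclideanSpace ℝ G.Edge)
      = WithLp.toLp 2 (fun e => ε e * Real.sqrt (y e))
    congr 1
    funext e
    norm_num
  · intro s
    have h0 : (0:ℝ) ≤ 1 - (s : ℝ) := by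
      have := s.2.2
      linarith
    have h1 : (0:ℝ) ≤ (s : ℝ) := s.2.1
    have hz : ∀ e, 0 ≤ (1 - (s : ℝ)) * x e + (s : ℝ) * y e := fun e =>
      add_nonneg (mul_nonneg h0 (hx e)) (mul_nonneg h1 (hy e))
    apply G.sqrt_mem_invariantSet c hz _ ε hε
    have : (fun e => (1 - (s : ℝ)) * x e + (s : ℝ) * y e)
        = (1 - (s : ℝ)) • x + (s : ℝ) • y := by
      funext e
      simp
    rw [this, Matrix.mulVec_add, Matrix.mulVec_smul, Matrix.mulVec_smul, hxc, hyc]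
    funext v
    simp only [Pi.add_apply, Pi.smul_apply, smul_eq_mul]
    ring

lemma signs_joined (c : G.Hidden → ℝ)
    (hnull : ∀ e₀ : G.Edge, ∃ x : G.Edge → ℝ, (∀ e, 0 ≤ x e) ∧ x e₀ = 0 ∧ G.B.mulVec x = c)
    {x₀ : G.Edge → ℝ} (hx₀ : ∀ e, 0 ≤ x₀ e) (hx₀c : G.B.mulVec x₀ = c)
    (s : Finset G.Edge) :
    ∀ ε : G.Edge → ℝ, (∀ e, ε e = 1 ∨ ε e = -1) → (∀ e ∉ s, ε e = 1) →
    JoinedIn (G.invariantSet c)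
      (WithLp.toLp 2 (fun e => ε e * Real.sqrt (x₀ e)) : EuclideanSpace ℝ G.Edge)
      (WithLp.toLp 2 (fun e => Real.sqrt (x₀ e)) : EuclideanSpace ℝ G.Edge) := by
  induction s using Finset.induction_on with
  | empty =>
    intro ε hε h1
    have hee : (WithLp.toLp 2 (fun e => ε e * Real.sqrt (x₀ e)) : EuclideanSpace ℝ G.Edge)
        = WithLp.toLp 2 (fun e => Real.sqrt (x₀ e)) := by
      congr 1
      funext e
      rw [h1 e (Finset.notMem_empty e), one_mul]
    rw [hee]
    refine JoinedIn.refl ?_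
    have := G.sqrt_mem_invariantSet c hx₀ hx₀c (fun _ => 1) (fun _ => Or.inl rfl)
    simpa using this
  | @insert a s ha ih =>
    intro ε hε h1
    by_cases hεa : ε a = 1
    · refine ih ε hε (fun e he => ?_)
      rcases eq_or_ne e a with rfl | hne
      · exact hεa
      · exact h1 e (by simp [Finset.mem_insert, hne, he])
    · have hεa' : ε a = -1 := (hε a).resolve_left hεa
      obtain ⟨xa, hxa0, hxaa, hxac⟩ := hnull a
      set ε' := Function.update ε a 1 with hε'def
      have hε' : ∀ e, ε' e = 1 ∨ ε' e = -1 := by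
        intro e
        rcases eq_or_ne e a with rfl | h
        · left; rw [hε'def, Function.update_self]
        · rw [hε'def, Function.update_of_ne h]; exact hε e
      have j1 := G.joined_sqrt c hx₀ hxa0 hx₀c hxac ε hε
      have key : (WithLp.toLp 2 (fun e => ε e * Real.sqrt (xa e)) : EuclideanSpace ℝ G.Edge)
          = WithLp.toLp 2 (fun e => ε' e * Real.sqrt (xa e)) := by
        congr 1
        funext e
        rcases eq_or_ne e a with rfl | h
        · rw [hxaa, Real.sqrt_zero, mul_zero, mul_zero]
        · rw [hε'def, Function.update_of_ne h]
      have j2 := G.joined_sqrt c hxa0 hx₀ hxac hx₀c ε' hε'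
      have j3 : JoinedIn (G.invariantSet c)
          (WithLp.toLp 2 (fun e => ε' e * Real.sqrt (x₀ e)) : EuclideanSpace ℝ G.Edge)
          (WithLp.toLp 2 (fun e => Real.sqrt (x₀ e))) := by
        refine ih ε' hε' (fun e he => ?_)
        rcases eq_or_ne e a with rfl | h
        · rw [hε'def, Function.update_self]
        · rw [hε'def, Function.update_of_ne h]
          exact h1 e (by simp [Finset.mem_insert, h, he])
      exact (j1.trans ((key ▸ j2 : JoinedIn _ _ _))).trans j3

lemma connected_of_null (c : G.Hidden → ℝ)
    (hnull : ∀ e₀ : G.Edge, ∃ x : G.Edge → ℝ, (∀ e, 0 ≤ x e) ∧ x e₀ = 0 ∧ G.B.mulVec x = c)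
    {x₀ : G.Edge → ℝ} (hx₀ : ∀ e, 0 ≤ x₀ e) (hx₀c : G.B.mulVec x₀ = c) :
    IsConnected (G.invariantSet c) := by
  apply IsPathConnected.isConnected
  have hbase : (WithLp.toLp 2 (fun e => Real.sqrt (x₀ e)) : EuclideanSpace ℝ G.Edge) ∈ G.invariantSet c := by
    have := G.sqrt_mem_invariantSet c hx₀ hx₀c (fun _ => 1) (fun _ => Or.inl rfl)
    simpa using this
  refine ⟨(WithLp.toLp 2 (fun e => Real.sqrt (x₀ e)) : EuclideanSpace ℝ G.Edge), hbase, ?_⟩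
  intro θ hθ
  have hθmem : G.B.mulVec (fun e => θ e ^ 2) = c := hθ
  set ε : G.Edge → ℝ := fun e => if θ e < 0 then -1 else 1 with hεdef
  have hε : ∀ e, ε e = 1 ∨ ε e = -1 := by
    intro e
    by_cases h : θ e < 0
    · right; rw [hεdef]; simp [h]
    · left; rw [hεdef]; simp [h]
  have hθeq : θ = (WithLp.toLp 2 (fun e => ε e * Real.sqrt (θ e ^ 2)) : EuclideanSpace ℝ G.Edge) := by
    ext e
    simp only [PiLp.toLp_apply]
    rw [Real.sqrt_sq_eq_abs]
    by_cases h : θ e < 0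
    · rw [hεdef]
      simp only [h, if_true]
      rw [abs_of_neg h]
      ring
    · rw [hεdef]
      simp only [h, if_false]
      rw [abs_of_nonneg (not_lt.1 h), one_mul]
  have j1 := G.joined_sqrt c (x := fun e => θ e ^ 2) (y := x₀)
    (fun e => sq_nonneg _) hx₀ hθmem hx₀c ε hε
  have j2 := G.signs_joined c hnull hx₀ hx₀c Finset.univ ε hε
    (fun e he => absurd (Finset.mem_univ e) he)
  exact ((hθeq ▸ (j1.trans j2) : JoinedIn _ _ _)).symm

lemma null_of_connected (c : G.Hidden → ℝ)
    (hconn : IsConnected (G.invariantSet c)) (e₀ : G.Edge) :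
    ∃ x : G.Edge → ℝ, (∀ e, 0 ≤ x e) ∧ x e₀ = 0 ∧ G.B.mulVec x = c := by
  obtain ⟨θ, hθ⟩ := hconn.nonempty
  set θ' : EuclideanSpace ℝ G.Edge := WithLp.toLp 2 (Function.update (fun e => θ e) e₀ (-(θ e₀))) with hθ'def
  have hθ'mem : θ' ∈ G.invariantSet c := by
    show G.B.mulVec (fun e => θ' e ^ 2) = c
    have heq : (fun e => θ' e ^ 2) = fun e => θ e ^ 2 := by
      funext e
      rcases eq_or_ne e e₀ with rfl | h
      · rw [hθ'def, PiLp.toLp_apply, Function.update_self, neg_pow]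
        norm_num
      · rw [hθ'def, PiLp.toLp_apply, Function.update_of_ne h]
    rw [heq]
    exact hθ
  have hcont : Continuous (fun ψ : EuclideanSpace ℝ G.Edge => ψ e₀) :=
    (continuous_apply e₀).comp (PiLp.continuous_ofLp 2 (fun _ : G.Edge => ℝ))
  have himg : IsPreconnected ((fun ψ : EuclideanSpace ℝ G.Edge => ψ e₀) '' G.invariantSet c) :=
    (hconn.image _ hcont.continuousOn).isPreconnected
  have h1 : θ e₀ ∈ (fun ψ : EuclideanSpace ℝ G.Edge => ψ e₀) '' G.invariantSet c :=
    ⟨θ, hθ, rfl⟩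
  have h2 : -(θ e₀) ∈ (fun ψ : EuclideanSpace ℝ G.Edge => ψ e₀) '' G.invariantSet c :=
    ⟨θ', hθ'mem, by rw [hθ'def]; exact Function.update_self e₀ _ (fun e => θ e)⟩
  have h0 : (0:ℝ) ∈ (fun ψ : EuclideanSpace ℝ G.Edge => ψ e₀) '' G.invariantSet c := by
    rcases le_total 0 (θ e₀) with h | h
    · exact himg.Icc_subset h2 h1 ⟨by linarith, by linarith⟩
    · exact himg.Icc_subset h1 h2 ⟨by linarith, by linarith⟩
  obtain ⟨ψ, hψmem, hψ0⟩ := h0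
  refine ⟨fun e => ψ e ^ 2, fun e => sq_nonneg _, ?_, hψmem⟩
  show ψ e₀ ^ 2 = 0
  have hz : ψ e₀ = 0 := hψ0
  rw [hz]
  norm_num

end DagNet
/-- `H_G(c)` is connected iff for every out-bottleneck `v` with
unique outgoing edge `e*` (resp. in-bottleneck `w` with unique incoming edge
`e'`) there is a nonnegative `x` with `x_{e*} = 0` (resp. `x_{e'} = 0`) and
`B̃ x = c`. -/
theorem statement10 (G : DagNet)
    (hpath : ∀ v ∈ G.hidden, ∃ i ∈ G.VI, ∃ o ∈ G.VO,
      G.Reaches i v ∧ G.Reaches v o)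
    (c : G.Hidden → ℝ) :
    IsConnected (G.invariantSet c) ↔
      ((∀ v : G.V, G.OutBottleneck v → ∀ estar : G.Edge,
          (estar : G.V × G.V).1 = v →
          ∃ x : G.Edge → ℝ, (∀ e, 0 ≤ x e) ∧ x estar = 0 ∧ G.B.mulVec x = c) ∧
       (∀ w : G.V, G.InBottleneck w → ∀ eprime : G.Edge,
          (eprime : G.V × G.V).2 = w →
          ∃ x : G.Edge → ℝ, (∀ e, 0 ≤ x e) ∧ x eprime = 0 ∧ G.B.mulVec x = c)) := by
  constructor
  · intro h
    exact ⟨fun v _ estar _ => G.null_of_connected c h estar,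
           fun w _ eprime _ => G.null_of_connected c h eprime⟩
  · rintro ⟨hOut, hIn⟩
    obtain ⟨x₀, hx₀, hx₀c⟩ := G.exists_sol c hpath
    exact G.connected_of_null c (G.nullable c hpath hOut hIn) hx₀ hx₀c
end
end

section
/- Let v be a hidden node of G and let b_v ∈ ℝ^E be the v-th row of B̃, i.e., (b_v)_e = 1 if e enters v, (b_v)_e = −1 if e leaves v, and 0 otherwise. If L : ℝ^E → ℝ is twice continuously differentiable and satisfies L(T^v_α(θ)) = L(θ) for every θ ∈ ℝ^E and every α > 0, then for every θ ∈ ℝ^E the Hessian and gradient of L satisfy Hess L(θ)·(θ ⊙ b_v) + ∇L(θ) ⊙ b_v = 0, where ⊙ denotes the entrywise (Hadamard) product. -/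
noncomputable section

open Matrix Finset

open InnerProductSpace

section AuxMul

variable {ι : Type*} [Fintype ι]

/-- Entrywise multiplication by a fixed vector, as a continuous linear map. -/
noncomputable def mulCLM (b : ι → ℝ) : EuclideanSpace ℝ ι →L[ℝ] EuclideanSpace ℝ ι :=
  LinearMap.toContinuousLinearMap
    { toFun := fun x => (WithLp.toLp 2 (fun e => x e * b e) : EuclideanSpace ℝ ι)
      map_add' := by
        intro x y; ext e
        show (x e + y e) * b e = x e * b e + y e * b e
        ring
      map_smul' := by
        intro c x; ext e
        show (c * x e) * b e = c * (x e * b e)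
        ring }

lemma mulCLM_apply (b : ι → ℝ) (x : EuclideanSpace ℝ ι) (e : ι) :
    mulCLM b x e = x e * b e := rfl

lemma inner_mulCLM (b : ι → ℝ) (x y : EuclideanSpace ℝ ι) :
    (inner ℝ (mulCLM b x) y : ℝ) = inner ℝ x (mulCLM b y) := by
  simp only [PiLp.inner_apply, RCLike.inner_apply, conj_trivial, mulCLM_apply]
  exact Finset.sum_congr rfl fun e _ => by ring

theorem aux_main (L : EuclideanSpace ℝ ι → ℝ) (hL : ContDiff ℝ 2 L) (b : ι → ℝ)
    (hA : ∀ x : EuclideanSpace ℝ ι, fderiv ℝ L x (mulCLM b x) = 0)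
    (θ : EuclideanSpace ℝ ι) :
    fderiv ℝ (gradient L) θ (mulCLM b θ) + mulCLM b (gradient L θ) = 0 := by
  set D := fderiv ℝ L with hDdef
  have hDc : ContDiff ℝ 1 D := hL.fderiv_right (by norm_num)
  have hDd : Differentiable ℝ D := hDc.differentiable one_ne_zero
  have hLd : Differentiable ℝ L := hL.differentiable (by norm_num)
  have hB : ∀ w, fderiv ℝ D θ w (mulCLM b θ) + D θ (mulCLM b w) = 0 := by
    intro w
    have h1 : HasFDerivAt (fun y => D y (mulCLM b y))
        ((D θ).comp (mulCLM b) + (fderiv ℝ D θ).flip (mulCLM b θ)) θ :=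
      (hDd θ).hasFDerivAt.clm_apply (mulCLM b).hasFDerivAt
    have h2 : HasFDerivAt (fun y => D y (mulCLM b y)) (0 : EuclideanSpace ℝ ι →L[ℝ] ℝ) θ := by
      have hfun : (fun y => D y (mulCLM b y)) = fun _ => (0 : ℝ) := funext hA
      rw [hfun]; exact (hasFDerivAt_const (0 : ℝ) θ : HasFDerivAt _ (0 : EuclideanSpace ℝ ι →L[ℝ] ℝ) θ)
    have h3 := h1.unique h2
    have h4 := ContinuousLinearMap.ext_iff.mp h3 w
    simpa [add_comm] using h4
  have hsymm : ∀ u w, fderiv ℝ D θ u w = fderiv ℝ D θ w u :=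
    second_derivative_symmetric (fun y => (hLd y).hasFDerivAt) (hDd θ).hasFDerivAt
  have hgrad : gradient L = (fun φ => (toDual ℝ (EuclideanSpace ℝ ι)).symm φ) ∘ D := rfl
  have hfg : ∀ u : EuclideanSpace ℝ ι, fderiv ℝ (gradient L) θ u =
      (toDual ℝ (EuclideanSpace ℝ ι)).symm (fderiv ℝ D θ u) := by
    intro u
    rw [hgrad]
    rw [LinearIsometryEquiv.comp_fderiv]
    rfl
  set X := fderiv ℝ (gradient L) θ (mulCLM b θ) + mulCLM b (gradient L θ) with hX
  have key : ∀ w : EuclideanSpace ℝ ι, (inner ℝ X w : ℝ) = 0 := by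
    intro w
    rw [hX, inner_add_left]
    have e1 : (inner ℝ (fderiv ℝ (gradient L) θ (mulCLM b θ)) w : ℝ) =
        fderiv ℝ D θ (mulCLM b θ) w := by
      rw [hfg]; exact InnerProductSpace.toDual_symm_apply
    have e2 : (inner ℝ (mulCLM b (gradient L θ)) w : ℝ) = D θ (mulCLM b w) := by
      rw [inner_mulCLM]
      show (inner ℝ ((toDual ℝ (EuclideanSpace ℝ ι)).symm (D θ)) (mulCLM b w) : ℝ) = _
      exact InnerProductSpace.toDual_symm_apply
    rw [e1, e2, hsymm]
    exact hB w
  exact inner_self_eq_zero.mp (key X)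

end AuxMul


/-- The `v`-th row of the hidden incidence matrix, as a function on edges. -/
def rowB (G : DagNet) (v : G.V) : G.Edge → ℝ := fun e =>
  if (e : G.V × G.V).2 = v then 1
  else if (e : G.V × G.V).1 = v then -1 else 0

lemma rescale_one (G : DagNet) (v : G.V) (x : EuclideanSpace ℝ G.Edge) :
    G.rescale v 1 x = x := by
  ext e
  simp [DagNet.rescale]

lemma hasDerivAt_rescale (G : DagNet) (v : G.V) (x : EuclideanSpace ℝ G.Edge) :
    HasDerivAt (fun α : ℝ => G.rescale v α x) (mulCLM (rowB G v) x) 1 := by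
  have hcoord : ∀ e : G.Edge,
      HasDerivAt (fun α : ℝ => G.rescale v α x e) (x e * rowB G v e) 1 := by
    intro e
    by_cases h2 : (e : G.V × G.V).2 = v
    · have hf : (fun α : ℝ => G.rescale v α x e) = fun α : ℝ => α * x e := by
        funext α; simp [DagNet.rescale, h2]
      rw [hf, rowB, if_pos h2, mul_one]
      simpa using (hasDerivAt_id (1 : ℝ)).mul_const (x e)
    · by_cases h1 : (e : G.V × G.V).1 = v
      · have hf : (fun α : ℝ => G.rescale v α x e) = fun α : ℝ => α⁻¹ * x e := by
          funext α; simp [DagNet.rescale, h2, h1]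
        rw [hf, rowB, if_neg h2, if_pos h1]
        have h := (hasDerivAt_inv (one_ne_zero : (1 : ℝ) ≠ 0)).mul_const (x e)
        rw [show x e * -1 = -(1 ^ 2 : ℝ)⁻¹ * x e by norm_num]
        exact h
      · have hf : (fun α : ℝ => G.rescale v α x e) = fun _ : ℝ => x e := by
          funext α; simp [DagNet.rescale, h2, h1]
        rw [hf, rowB, if_neg h2, if_neg h1, mul_zero]
        exact hasDerivAt_const (1 : ℝ) (x e)
  have hpi : HasDerivAt (fun α : ℝ => (fun e => G.rescale v α x e : G.Edge → ℝ))
      (fun e => x e * rowB G v e) 1 := hasDerivAt_pi.mpr hcoord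
  exact ((PiLp.continuousLinearEquiv 2 ℝ
    (fun _ : G.Edge => ℝ)).symm.hasFDerivAt).comp_hasDerivAt 1 hpi

/-- if `L` is `C²` and invariant under the rescaling `T^v_α` at
a hidden node `v`, then `Hess L(θ)·(θ ⊙ b_v) + ∇L(θ) ⊙ b_v = 0`, where `b_v`
is the `v`-th row of `B̃` and `⊙` is the entrywise product. -/
theorem statement13 (G : DagNet) (v : G.V) (hv : v ∈ G.hidden)
    (L : EuclideanSpace ℝ G.Edge → ℝ) (hL : ContDiff ℝ 2 L)
    (hinv : ∀ (θ : EuclideanSpace ℝ G.Edge) (α : ℝ), 0 < α →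
      L (G.rescale v α θ) = L θ)
    (θ : EuclideanSpace ℝ G.Edge) :
    let b : EuclideanSpace ℝ G.Edge := WithLp.toLp 2 fun e =>
      if (e : G.V × G.V).2 = v then 1
      else if (e : G.V × G.V).1 = v then -1 else 0
    let hadb : EuclideanSpace ℝ G.Edge := WithLp.toLp 2 fun e => θ e * b e
    let gradb : EuclideanSpace ℝ G.Edge := WithLp.toLp 2 fun e => gradient L θ e * b e
    fderiv ℝ (gradient L) θ hadb + gradb = 0 :=  by
  intro b hadb gradb
  have hLd : Differentiable ℝ L := hL.differentiable (by norm_num)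
  have hA : ∀ x : EuclideanSpace ℝ G.Edge,
      fderiv ℝ L x (mulCLM (rowB G v) x) = 0 := by
    intro x
    have hF : HasFDerivAt L (fderiv ℝ L x) (G.rescale v 1 x) :=
      (rescale_one G v x).symm ▸ (hLd x).hasFDerivAt
    have hcomp : HasDerivAt (fun α : ℝ => L (G.rescale v α x))
        (fderiv ℝ L x (mulCLM (rowB G v) x)) 1 := by
      exact hF.comp_hasDerivAt 1 (hasDerivAt_rescale G v x)
    have hconst : HasDerivAt (fun α : ℝ => L (G.rescale v α x)) 0 1 := by
      have hev : (fun α : ℝ => L (G.rescale v α x)) =ᶠ[nhds 1] (fun _ => L x) := by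
        filter_upwards [Ioi_mem_nhds (zero_lt_one : (0 : ℝ) < 1)] with α hα
        exact hinv x α hα
      exact (hasDerivAt_const (1 : ℝ) (L x)).congr_of_eventuallyEq hev
    exact hcomp.unique hconst
  exact aux_main L hL (rowB G v) hA θ
end
end

section
/- Let m, n be natural numbers, let H : ℝ → ℝ^{n×n} be a continuous matrix-valued function, and let J : ℝ → ℝ^{m×n} be a differentiable matrix-valued function satisfying the linear matrix differential equation J'(t) = J(t)·H(t) for all t ∈ ℝ. Then the rank of J is constant: rank J(t) = rank J(0) for all t ∈ ℝ. -/
open Matrix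

open Set

set_option maxHeartbeats 1000000


/-- Norm bound for `vecMul`. -/
lemma vecMul_norm_le {n : ℕ} (M : Matrix (Fin n) (Fin n) ℝ) (x : Fin n → ℝ) :
    ‖x ᵥ* M‖ ≤ (∑ i, ∑ j, |M i j|) * ‖x‖ := by
  have hC : (0:ℝ) ≤ ∑ i, ∑ j, |M i j| :=
    Finset.sum_nonneg fun i _ => Finset.sum_nonneg fun j _ => abs_nonneg _
  rw [pi_norm_le_iff_of_nonneg (by positivity)]
  intro j
  calc ‖(x ᵥ* M) j‖ = |∑ i, x i * M i j| := by
        simp [Matrix.vecMul, dotProduct, Real.norm_eq_abs]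
    _ ≤ ∑ i, |x i * M i j| := Finset.abs_sum_le_sum_abs _ _
    _ ≤ ∑ i, |M i j| * ‖x‖ := by
        refine Finset.sum_le_sum fun i _ => ?_
        rw [abs_mul, mul_comm]
        exact mul_le_mul_of_nonneg_left (norm_le_pi_norm x i) (abs_nonneg _)
    _ = (∑ i, |M i j|) * ‖x‖ := by rw [Finset.sum_mul]
    _ ≤ (∑ i, ∑ j, |M i j|) * ‖x‖ := by
        apply mul_le_mul_of_nonneg_right _ (norm_nonneg x)
        exact Finset.sum_le_sum fun i _ => Finset.single_le_sum
          (f := fun j => |M i j|) (fun j _ => abs_nonneg _) (Finset.mem_univ j)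

/-- Key: left-kernel vectors propagate along the flow. -/
lemma key_prop {m n : ℕ} (H : ℝ → Matrix (Fin n) (Fin n) ℝ)
    (hH : ∀ (i j : Fin n), Continuous fun t => H t i j)
    (J : ℝ → Matrix (Fin m) (Fin n) ℝ)
    (hJ : ∀ (t : ℝ) (i : Fin m) (j : Fin n),
      HasDerivAt (fun s => J s i j) ((J t * H t) i j) t)
    (c : Fin m → ℝ) (t₀ t₁ : ℝ) (hc : c ᵥ* J t₀ = 0) : c ᵥ* J t₁ = 0 := by
  set a : ℝ := min t₀ t₁ - 1 with ha
  set b : ℝ := max t₀ t₁ + 1 with hb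
  have ht₀ : t₀ ∈ Ioo a b :=
    ⟨by simp [ha]; linarith [min_le_left t₀ t₁], by simp [hb]; linarith [le_max_left t₀ t₁]⟩
  have ht₁ : t₁ ∈ Ioo a b :=
    ⟨by simp [ha]; linarith [min_le_right t₀ t₁], by simp [hb]; linarith [le_max_right t₀ t₁]⟩
  have hab : a < b := ht₀.1.trans ht₀.2
  -- clamp
  set cl : ℝ → ℝ := fun s => max a (min s b) with hcl
  have hclm : ∀ s, cl s ∈ Icc a b := fun s =>
    ⟨le_max_left _ _, max_le (le_of_lt hab) (min_le_right _ _)⟩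
  have hcleq : ∀ s ∈ Ioo a b, cl s = s := by
    intro s hs
    simp [hcl, min_eq_left hs.2.le, max_eq_right hs.1.le]
  -- uniform Lipschitz bound
  have hcont : ContinuousOn (fun s => ∑ i, ∑ j, |H s i j|) (Icc a b) := by
    apply Continuous.continuousOn
    exact continuous_finset_sum _ fun i _ => continuous_finset_sum _ fun j _ => (hH i j).abs
  obtain ⟨K, hK⟩ : ∃ K, ∀ s ∈ Icc a b, (∑ i, ∑ j, |H s i j|) ≤ K := by
    obtain ⟨K, hK⟩ := isCompact_Icc.bddAbove_image hcont
    exact ⟨K, fun s hs => hK (Set.mem_image_of_mem _ hs)⟩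
  set v : ℝ → (Fin n → ℝ) → (Fin n → ℝ) := fun s x => x ᵥ* H (cl s) with hv
  have hlip : ∀ s, LipschitzWith (Real.toNNReal K) (v s) := by
    intro s
    apply LipschitzWith.of_dist_le_mul
    intro x y
    rw [dist_eq_norm, dist_eq_norm]
    have h1 : v s x - v s y = (x - y) ᵥ* H (cl s) := by
      show x ᵥ* H (cl s) - y ᵥ* H (cl s) = _
      rw [Matrix.sub_vecMul]
    rw [h1]
    calc ‖(x - y) ᵥ* H (cl s)‖ ≤ (∑ i, ∑ j, |H (cl s) i j|) * ‖x - y‖ := vecMul_norm_le _ _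
      _ ≤ K * ‖x - y‖ := mul_le_mul_of_nonneg_right (hK _ (hclm s)) (norm_nonneg _)
      _ ≤ (Real.toNNReal K : ℝ) * ‖x - y‖ :=
          mul_le_mul_of_nonneg_right (Real.le_coe_toNNReal K) (norm_nonneg _)
  -- solutions
  have hf : ∀ s ∈ Ioo a b,
      HasDerivAt (fun u => c ᵥ* J u) (v s (c ᵥ* J s)) s ∧ (c ᵥ* J s) ∈ (univ : Set (Fin n → ℝ)) := by
    intro s hs
    refine ⟨?_, trivial⟩
    rw [hasDerivAt_pi]
    intro j
    have hd : HasDerivAt (fun u => ∑ i, c i * J u i j) (∑ i, c i * (J s * H s) i j) s :=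
      HasDerivAt.fun_sum fun i _ => (hJ s i j).const_mul (c i)
    have h1 : (fun u => (c ᵥ* J u) j) = fun u => ∑ i, c i * J u i j := by
      funext u; simp [Matrix.vecMul, dotProduct]
    have h2 : v s (c ᵥ* J s) j = ∑ i, c i * (J s * H s) i j := by
      show ((c ᵥ* J s) ᵥ* H (cl s)) j = _
      rw [hcleq s hs, Matrix.vecMul_vecMul]
      simp [Matrix.vecMul, dotProduct]
    rw [h1, h2]
    exact hd
  have hg : ∀ s ∈ Ioo a b,
      HasDerivAt (fun _ : ℝ => (0 : Fin n → ℝ)) (v s 0) s ∧ (0 : Fin n → ℝ) ∈ (univ : Set (Fin n → ℝ)) := by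
    intro s hs
    refine ⟨?_, trivial⟩
    have : v s 0 = 0 := by show (0 : Fin n → ℝ) ᵥ* H (cl s) = 0; exact Matrix.zero_vecMul _
    rw [this]
    exact hasDerivAt_const s 0
  have := ODE_solution_unique_of_mem_Ioo (fun s _ => (hlip s).lipschitzOnWith) ht₀ hf hg hc
  exact this ht₁


/-- if `H : ℝ → ℝ^{n×n}` is continuous (entrywise) and
`J : ℝ → ℝ^{m×n}` is differentiable (entrywise) with `J'(t) = J(t)·H(t)` for
all `t`, then the rank of `J(t)` is constant. -/
theorem statement14 (m n : ℕ) (H : ℝ → Matrix (Fin n) (Fin n) ℝ)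
    (hH : ∀ (i j : Fin n), Continuous fun t => H t i j)
    (J : ℝ → Matrix (Fin m) (Fin n) ℝ)
    (hJ : ∀ (t : ℝ) (i : Fin m) (j : Fin n),
      HasDerivAt (fun s => J s i j) ((J t * H t) i j) t) :
    ∀ t : ℝ, (J t).rank = (J 0).rank := by
  intro t
  have hker : LinearMap.ker ((J t)ᵀ.mulVecLin) = LinearMap.ker ((J 0)ᵀ.mulVecLin) := by
    ext c
    simp only [LinearMap.mem_ker, Matrix.mulVecLin_apply, Matrix.mulVec_transpose]
    exact ⟨fun h => key_prop H hH J hJ c t 0 h, fun h => key_prop H hH J hJ c 0 t h⟩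
  have h1 := LinearMap.finrank_range_add_finrank_ker ((J t)ᵀ.mulVecLin)
  have h2 := LinearMap.finrank_range_add_finrank_ker ((J 0)ᵀ.mulVecLin)
  rw [← Matrix.rank_transpose (J t), ← Matrix.rank_transpose (J 0)]
  unfold Matrix.rank
  rw [hker] at h1
  omega
end
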